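/- arXiv:1603.08140 — 5 statements merged into one kernel-verified Lean document; each statement's English description precedes it below -/
import Mathlib

section
/- If g is a holomorphic function on the open unit disk D ⊂ ℂ satisfying 0 < |g(z)| ≤ 1 for all z ∈ D, then |g'(0)| ≤ 2 |g(0)| log(1/|g(0)|). -/
open Complex Metric Set intervalIntegral

/-- Möbius-type inequality: if `a` and `b` have positive real part then `|a-b| < |a + conj b|`. -/
lemma moebius_abs_lt {a b : ℂ} (ha : 0 < a.re) (hb : 0 < b.re) :
    ‖a - b‖ < ‖a + (starRingEnd ℂ) b‖ := by
  rw [Complex.norm_def, Complex.norm_def]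
  apply Real.sqrt_lt_sqrt (Complex.normSq_nonneg _)
  simp only [Complex.normSq_apply, Complex.sub_re, Complex.sub_im, Complex.add_re,
    Complex.add_im, Complex.conj_re, Complex.conj_im]
  nlinarith

/-- A nowhere vanishing holomorphic function on the unit disk has a holomorphic logarithm. -/
lemma exists_holomorphic_log (g : ℂ → ℂ) (hg : DifferentiableOn ℂ g (ball (0 : ℂ) 1))
    (hne : ∀ z ∈ ball (0 : ℂ) 1, g z ≠ 0) :
    ∃ h : ℂ → ℂ, (∀ z ∈ ball (0 : ℂ) 1, HasDerivAt h (deriv g z / g z) z) ∧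
      (∀ z ∈ ball (0 : ℂ) 1, Complex.exp (h z) = g z) ∧ h 0 = Complex.log (g 0) := by
  have hga : AnalyticOnNhd ℂ g (ball (0 : ℂ) 1) := hg.analyticOnNhd isOpen_ball
  set f : ℂ → ℂ := fun z => deriv g z / g z with hf_def
  have hf : DifferentiableOn ℂ f (ball (0 : ℂ) 1) :=
    (hga.deriv.differentiableOn).div hg hne
  have hfa : AnalyticOnNhd ℂ f (ball (0 : ℂ) 1) := hf.analyticOnNhd isOpen_ball
  have hf' : DifferentiableOn ℂ (deriv f) (ball (0 : ℂ) 1) := hfa.deriv.differentiableOn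
  have hfc : ContinuousOn f (ball (0 : ℂ) 1) := hf.continuousOn
  have hf'c : ContinuousOn (deriv f) (ball (0 : ℂ) 1) := hf'.continuousOn
  have hf_at : ∀ w ∈ ball (0 : ℂ) 1, HasDerivAt f (deriv f w) w := fun w hw =>
    (hf.differentiableAt (isOpen_ball.mem_nhds hw)).hasDerivAt
  set h : ℂ → ℂ := fun z => Complex.log (g 0) + ∫ t in (0:ℝ)..1, z * f ((t : ℂ) * z) with hh_def
  have h0ball : (0 : ℂ) ∈ ball (0 : ℂ) 1 := by simp
  -- membership facts
  have hmem : ∀ (t : ℝ) (x : ℂ), t ∈ Set.Icc (0:ℝ) 1 → x ∈ ball (0 : ℂ) 1 →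
      (t : ℂ) * x ∈ ball (0 : ℂ) 1 := by
    intro t x ht hx
    simp only [mem_ball, dist_zero_right] at hx ⊢
    rw [norm_mul, Complex.norm_real, Real.norm_eq_abs, _root_.abs_of_nonneg ht.1]
    calc t * ‖x‖ ≤ 1 * ‖x‖ := by
          apply mul_le_mul_of_nonneg_right ht.2 (norm_nonneg _)
      _ < 1 := by simpa using hx
  -- h 0 = log (g 0)
  have hh0 : h 0 = Complex.log (g 0) := by
    simp [hh_def]
  -- the key derivative fact
  have hkey : ∀ z ∈ ball (0 : ℂ) 1, HasDerivAt h (f z) z := by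
    intro x₀ hx₀
    have hx₀n : ‖x₀‖ < 1 := by simpa [mem_ball, dist_zero_right] using hx₀
    set ε : ℝ := (1 - ‖x₀‖) / 3 with hε_def
    have hε : 0 < ε := by
      have : 0 < 1 - ‖x₀‖ := by linarith
      positivity
    set ρ : ℝ := ‖x₀‖ + 2 * ε with hρ_def
    have hρ1 : ρ < 1 := by
      simp only [hρ_def, hε_def]
      linarith
    have hρ0 : 0 ≤ ρ := by positivity
    have hKsub : closedBall (0 : ℂ) ρ ⊆ ball (0 : ℂ) 1 := closedBall_subset_ball hρ1
    -- bounds for f and deriv f on the compact set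
    obtain ⟨C₁, hC₁⟩ : ∃ C, ∀ w ∈ closedBall (0 : ℂ) ρ, ‖f w‖ ≤ C :=
      (isCompact_closedBall _ _).exists_bound_of_continuousOn (hfc.mono hKsub)
    obtain ⟨C₂, hC₂⟩ : ∃ C, ∀ w ∈ closedBall (0 : ℂ) ρ, ‖deriv f w‖ ≤ C :=
      (isCompact_closedBall _ _).exists_bound_of_continuousOn (hf'c.mono hKsub)
    have hC₁0 : 0 ≤ C₁ := le_trans (norm_nonneg _) (hC₁ 0 (by simp [hρ0]))
    have hC₂0 : 0 ≤ C₂ := le_trans (norm_nonneg _) (hC₂ 0 (by simp [hρ0]))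
    -- membership: x in ball x₀ ε, t ∈ [0,1] gives t*x in closedBall 0 ρ
    have hmem' : ∀ (t : ℝ) (x : ℂ), t ∈ Set.Icc (0:ℝ) 1 → x ∈ ball x₀ ε →
        (t : ℂ) * x ∈ closedBall (0 : ℂ) ρ := by
      intro t x ht hx
      have hxn : ‖x‖ ≤ ρ := by
        have := mem_ball_iff_norm.1 hx
        calc ‖x‖ = ‖x₀ + (x - x₀)‖ := by ring_nf
          _ ≤ ‖x₀‖ + ‖x - x₀‖ := norm_add_le _ _
          _ ≤ ‖x₀‖ + 2 * ε := by linarith [le_of_lt this]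
      simp only [mem_closedBall, dist_zero_right]
      rw [norm_mul, Complex.norm_real, Real.norm_eq_abs, _root_.abs_of_nonneg ht.1]
      calc t * ‖x‖ ≤ 1 * ρ := by
            apply mul_le_mul ht.2 hxn (norm_nonneg _) zero_le_one
        _ = ρ := one_mul ρ
    have hball_sub : ball x₀ ε ⊆ ball (0 : ℂ) 1 := by
      intro x hx
      have := hmem' 1 x (by norm_num) hx
      simpa using hKsub this
    -- apply dominated differentiation
    have main := intervalIntegral.hasDerivAt_integral_of_dominated_loc_of_deriv_le
      (F := fun (x : ℂ) (t : ℝ) => x * f ((t : ℂ) * x))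
      (F' := fun (x : ℂ) (t : ℝ) => f ((t : ℂ) * x) + x * (deriv f ((t : ℂ) * x) * (t : ℂ)))
      (x₀ := x₀) (a := 0) (b := 1) (μ := MeasureTheory.volume)
      (bound := fun _ => C₁ + C₂) (s := ball x₀ ε) (ball_mem_nhds x₀ hε) ?_ ?_ ?_ ?_ ?_ ?_
    · -- conclude
      have hint : (∫ t in (0:ℝ)..1,
          (f ((t : ℂ) * x₀) + x₀ * (deriv f ((t : ℂ) * x₀) * (t : ℂ)))) = f x₀ := by
        have : ∀ t ∈ Set.uIcc (0:ℝ) 1, HasDerivAt (fun s : ℝ => (s : ℂ) * f ((s : ℂ) * x₀))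
            (f ((t : ℂ) * x₀) + x₀ * (deriv f ((t : ℂ) * x₀) * (t : ℂ))) t := by
          intro t ht
          rw [Set.uIcc_of_le (by norm_num : (0:ℝ) ≤ 1)] at ht
          have htx : (t : ℂ) * x₀ ∈ ball (0 : ℂ) 1 := hmem t x₀ ht hx₀
          have he : HasDerivAt (fun w : ℂ => w * f (w * x₀))
              (f ((t : ℂ) * x₀) + (t : ℂ) * (deriv f ((t : ℂ) * x₀) * x₀)) (t : ℂ) := by
            have hinner : HasDerivAt (fun w : ℂ => f (w * x₀))
                (deriv f ((t : ℂ) * x₀) * x₀) (t : ℂ) := by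
              have := (hf_at _ htx).comp (t : ℂ)
                ((hasDerivAt_id (t : ℂ)).mul_const x₀)
              simpa [Function.comp_def] using this
            have := (hasDerivAt_id (t : ℂ)).mul hinner
            simpa [Pi.mul_def] using this
          have := he.comp_ofReal
          convert this using 1
          ring
        rw [intervalIntegral.integral_eq_sub_of_hasDerivAt this ?_]
        · simp
        · -- integrability of the derivative
          apply ContinuousOn.intervalIntegrable
          rw [Set.uIcc_of_le (by norm_num : (0:ℝ) ≤ 1)]
          have hcont1 : ContinuousOn (fun t : ℝ => (t : ℂ) * x₀) (Set.Icc 0 1) :=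
            (Complex.continuous_ofReal.continuousOn).mul continuousOn_const
          have hmaps : Set.MapsTo (fun t : ℝ => (t : ℂ) * x₀) (Set.Icc 0 1)
              (ball (0 : ℂ) 1) := fun t ht => hmem t x₀ ht hx₀
          exact ((hfc.comp hcont1 hmaps).add
            (continuousOn_const.mul (((hf'c.comp hcont1 hmaps)).mul
              (Complex.continuous_ofReal.continuousOn))))
      rw [hint] at main
      exact (main.2.const_add (Complex.log (g 0)))
    · -- hF_meas
      filter_upwards [isOpen_ball.mem_nhds (mem_ball_self hε)] with x hx
      apply ContinuousOn.aestronglyMeasurable _ measurableSet_uIoc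
      rw [Set.uIoc_of_le (by norm_num : (0:ℝ) ≤ 1)]
      have hcont1 : ContinuousOn (fun t : ℝ => (t : ℂ) * x) (Set.Ioc 0 1) :=
        (Complex.continuous_ofReal.continuousOn).mul continuousOn_const
      have hmaps : Set.MapsTo (fun t : ℝ => (t : ℂ) * x) (Set.Ioc 0 1) (ball (0 : ℂ) 1) :=
        fun t ht => hmem t x ⟨le_of_lt ht.1, ht.2⟩ (hball_sub hx)
      exact continuousOn_const.mul (hfc.comp hcont1 hmaps)
    · -- hF_int
      apply ContinuousOn.intervalIntegrable
      rw [Set.uIcc_of_le (by norm_num : (0:ℝ) ≤ 1)]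
      have hcont1 : ContinuousOn (fun t : ℝ => (t : ℂ) * x₀) (Set.Icc 0 1) :=
        (Complex.continuous_ofReal.continuousOn).mul continuousOn_const
      have hmaps : Set.MapsTo (fun t : ℝ => (t : ℂ) * x₀) (Set.Icc 0 1) (ball (0 : ℂ) 1) :=
        fun t ht => hmem t x₀ ht hx₀
      exact continuousOn_const.mul (hfc.comp hcont1 hmaps)
    · -- hF'_meas
      apply ContinuousOn.aestronglyMeasurable _ measurableSet_uIoc
      rw [Set.uIoc_of_le (by norm_num : (0:ℝ) ≤ 1)]
      have hcont1 : ContinuousOn (fun t : ℝ => (t : ℂ) * x₀) (Set.Ioc 0 1) :=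
        (Complex.continuous_ofReal.continuousOn).mul continuousOn_const
      have hmaps : Set.MapsTo (fun t : ℝ => (t : ℂ) * x₀) (Set.Ioc 0 1) (ball (0 : ℂ) 1) :=
        fun t ht => hmem t x₀ ⟨le_of_lt ht.1, ht.2⟩ hx₀
      exact (hfc.comp hcont1 hmaps).add
        (continuousOn_const.mul ((hf'c.comp hcont1 hmaps).mul
          (Complex.continuous_ofReal.continuousOn)))
    · -- h_bound
      filter_upwards with t ht x hx
      rw [Set.uIoc_of_le (by norm_num : (0:ℝ) ≤ 1)] at ht
      have ht' : t ∈ Set.Icc (0:ℝ) 1 := ⟨le_of_lt ht.1, ht.2⟩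
      have htx : (t : ℂ) * x ∈ closedBall (0 : ℂ) ρ := hmem' t x ht' hx
      have hxn : ‖x‖ ≤ 1 := by
        have := hball_sub hx
        simp only [mem_ball, dist_zero_right] at this
        exact le_of_lt this
      calc ‖f ((t : ℂ) * x) + x * (deriv f ((t : ℂ) * x) * (t : ℂ))‖
          ≤ ‖f ((t : ℂ) * x)‖ + ‖x * (deriv f ((t : ℂ) * x) * (t : ℂ))‖ := norm_add_le _ _
        _ ≤ C₁ + C₂ := by
            apply add_le_add (hC₁ _ htx)
            rw [norm_mul, norm_mul]
            calc ‖x‖ * (‖deriv f ((t : ℂ) * x)‖ * ‖(t : ℂ)‖)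
                ≤ 1 * (C₂ * 1) := by
                  apply mul_le_mul hxn _ (by positivity) zero_le_one
                  apply mul_le_mul (hC₂ _ htx) _ (norm_nonneg _) hC₂0
                  rw [Complex.norm_real, Real.norm_eq_abs, _root_.abs_of_nonneg ht'.1]
                  exact ht'.2
              _ = C₂ := by ring
    · exact intervalIntegrable_const
    · -- h_diff
      filter_upwards with t ht x hx
      rw [Set.uIoc_of_le (by norm_num : (0:ℝ) ≤ 1)] at ht
      have ht' : t ∈ Set.Icc (0:ℝ) 1 := ⟨le_of_lt ht.1, ht.2⟩
      have htx : (t : ℂ) * x ∈ ball (0 : ℂ) 1 := hmem t x ht' (hball_sub hx)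
      have hinner : HasDerivAt (fun y : ℂ => f ((t : ℂ) * y))
          (deriv f ((t : ℂ) * x) * (t : ℂ)) x := by
        have := (hf_at _ htx).comp x ((hasDerivAt_id x).const_mul (t : ℂ))
        simpa [Function.comp_def] using this
      have := (hasDerivAt_id x).mul hinner
      simpa [Pi.mul_def] using this
  refine ⟨h, hkey, ?_, hh0⟩
  -- exp h = g on the ball
  have hconst : ∀ z ∈ ball (0 : ℂ) 1, g z * Complex.exp (-h z) = g 0 * Complex.exp (-h 0) := by
    intro z hz
    have hφ : ∀ x ∈ ball (0 : ℂ) 1,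
        HasDerivAt (fun w => g w * Complex.exp (-h w)) 0 x := by
      intro x hx
      have hgx : HasDerivAt g (deriv g x) x :=
        (hg.differentiableAt (isOpen_ball.mem_nhds hx)).hasDerivAt
      have hhx : HasDerivAt h (f x) x := hkey x hx
      have hex : HasDerivAt (fun w => Complex.exp (-h w))
          (Complex.exp (-h x) * (-(f x))) x := by
        have := (hhx.neg).cexp
        simpa [mul_comm] using this
      have : HasDerivAt (fun w => g w * Complex.exp (-h w)) _ x := hgx.mul hex
      convert this using 1
      have : g x * (Complex.exp (-h x) * -f x) = -(deriv g x * Complex.exp (-h x)) := by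
        rw [hf_def]
        field_simp [hne x hx]
      rw [this]
      ring
    have := (convex_ball (0:ℂ) 1).is_const_of_fderivWithin_eq_zero
      (f := fun w => g w * Complex.exp (-h w))
      (𝕜 := ℂ)
      (fun x hx => ((hφ x hx).differentiableAt).differentiableWithinAt)
      (fun x hx => by
        rw [fderivWithin_eq_fderiv (isOpen_ball.uniqueDiffWithinAt hx)
          ((hφ x hx).differentiableAt)]
        have := ((hφ x hx).hasFDerivAt).fderiv
        rw [this]
        ext
        simp) hz h0ball
    exact this
  intro z hz
  have h1 : g 0 * Complex.exp (-h 0) = 1 := by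
    rw [hh0, Complex.exp_neg, Complex.exp_log (hne 0 h0ball)]
    field_simp [hne 0 h0ball]
  have h2 := hconst z hz
  rw [h1] at h2
  have h3 : Complex.exp (h z) * Complex.exp (-h z) = 1 := by
    rw [← Complex.exp_add]; simp
  calc Complex.exp (h z) = Complex.exp (h z) * (g z * Complex.exp (-h z)) := by
        rw [h2, mul_one]
    _ = g z * (Complex.exp (h z) * Complex.exp (-h z)) := by ring
    _ = g z := by rw [h3, mul_one]

theorem schwarz_pick_nonvanishing_at_zero (g : ℂ → ℂ)
    (hg : DifferentiableOn ℂ g (ball (0 : ℂ) 1))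
    (hpos : ∀ z ∈ ball (0 : ℂ) 1, 0 < ‖g z‖)
    (hle : ∀ z ∈ ball (0 : ℂ) 1, ‖g z‖ ≤ 1) :
    ‖deriv g 0‖ ≤ 2 * ‖g 0‖ * Real.log (1 / ‖g 0‖) := by
  have h0ball : (0 : ℂ) ∈ ball (0 : ℂ) 1 := by simp
  have hne : ∀ z ∈ ball (0 : ℂ) 1, g z ≠ 0 := by
    intro z hz h0
    have := hpos z hz
    rw [h0] at this
    simp at this
  obtain ⟨h, hder, hexp, hh0⟩ := exists_holomorphic_log g hg hne
  -- real parts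
  have hre : ∀ z ∈ ball (0 : ℂ) 1, (h z).re = Real.log (‖g z‖) := by
    intro z hz
    have : ‖Complex.exp (h z)‖ = ‖g z‖ := by rw [hexp z hz]
    rw [Complex.norm_exp] at this
    rw [← this, Real.log_exp]
  have hre_nonpos : ∀ z ∈ ball (0 : ℂ) 1, (h z).re ≤ 0 := by
    intro z hz
    rw [hre z hz]
    exact Real.log_nonpos (norm_nonneg _) (hle z hz)
  -- the main estimate via Schwarz lemma, for every ε > 0
  have main : ∀ ε : ℝ, 0 < ε →
      ‖deriv g 0 / g 0‖ ≤ 2 * (ε - (h 0).re) := by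
    intro ε hε
    set b : ℂ := (ε : ℂ) - h 0 with hb_def
    have hbre : 0 < b.re := by
      simp only [hb_def, Complex.sub_re, Complex.ofReal_re]
      linarith [hre_nonpos 0 h0ball]
    set H : ℂ → ℂ := fun z => (ε : ℂ) - h z with hH_def
    have hHre : ∀ z ∈ ball (0 : ℂ) 1, 0 < (H z).re := by
      intro z hz
      simp only [hH_def, Complex.sub_re, Complex.ofReal_re]
      linarith [hre_nonpos z hz]
    have hden : ∀ z ∈ ball (0 : ℂ) 1, H z + (starRingEnd ℂ) b ≠ 0 := by
      intro z hz hzero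
      have : (H z + (starRingEnd ℂ) b).re = 0 := by rw [hzero]; simp
      rw [Complex.add_re, Complex.conj_re] at this
      linarith [hHre z hz, hbre]
    set F : ℂ → ℂ := fun z => (H z - b) / (H z + (starRingEnd ℂ) b) with hF_def
    have hH0 : H 0 = b := by simp [hH_def, hb_def]
    have hF0 : F 0 = 0 := by
      simp [hF_def, hH0]
    have hHdiff : ∀ x ∈ ball (0 : ℂ) 1, HasDerivAt H (-(deriv g x / g x)) x := by
      intro x hx
      simpa using ((hder x hx).const_sub (ε : ℂ))
    have hFdiffOn : DifferentiableOn ℂ F (ball (0 : ℂ) 1) := by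
      apply DifferentiableOn.div
      · exact DifferentiableOn.sub
          (fun x hx => ((hHdiff x hx).differentiableAt).differentiableWithinAt)
          (differentiableOn_const b)
      · exact DifferentiableOn.add
          (fun x hx => ((hHdiff x hx).differentiableAt).differentiableWithinAt)
          (differentiableOn_const _)
      · exact hden
    have hmaps : Set.MapsTo F (ball (0 : ℂ) 1) (ball (F 0) 1) := by
      intro z hz
      rw [hF0]
      simp only [mem_ball, dist_zero_right]
      rw [hF_def]
      simp only [norm_div]
      rw [div_lt_one (by
        have := moebius_abs_lt (hHre z hz) hbre
        have h2 : (0:ℝ) ≤ ‖H z - b‖ := norm_nonneg _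
        calc (0:ℝ) ≤ ‖H z - b‖ := h2
          _ < ‖H z + (starRingEnd ℂ) b‖ := this)]
      exact moebius_abs_lt (hHre z hz) hbre
    have hschwarz := Complex.norm_deriv_le_div_of_mapsTo_ball hFdiffOn (hmaps.mono_right ball_subset_closedBall) one_pos
    -- compute deriv F 0
    have hFderiv : HasDerivAt F
        ((-(deriv g 0 / g 0) * (b + (starRingEnd ℂ) b) -
          (b - b) * (-(deriv g 0 / g 0))) / (b + (starRingEnd ℂ) b) ^ 2) 0 := by
      have hnum : HasDerivAt (fun z => H z - b) (-(deriv g 0 / g 0)) 0 := by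
        simpa using (hHdiff 0 h0ball).sub_const b
      have hden' : HasDerivAt (fun z => H z + (starRingEnd ℂ) b) (-(deriv g 0 / g 0)) 0 := by
        simpa using (hHdiff 0 h0ball).add_const ((starRingEnd ℂ) b)
      have hres := hnum.div hden' (hden 0 h0ball)
      rw [hH0] at hres
      exact hres
    have hderivF : deriv F 0 = (-(deriv g 0 / g 0) * (b + (starRingEnd ℂ) b) -
        (b - b) * (-(deriv g 0 / g 0))) / (b + (starRingEnd ℂ) b) ^ 2 := hFderiv.deriv
    have hbconj : b + (starRingEnd ℂ) b = ((2 * b.re : ℝ) : ℂ) := Complex.add_conj b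
    have hc0 : (0:ℝ) < 2 * b.re := by linarith
    have hcc : (((2 * b.re : ℝ)) : ℂ) ≠ 0 := by
      simpa using ne_of_gt hc0
    have e0 : deriv F 0 = -(deriv g 0 / g 0) / (((2 * b.re : ℝ)) : ℂ) := by
      rw [hderivF, sub_self, zero_mul, sub_zero, hbconj, sq, ← div_div, mul_div_assoc,
        div_self hcc, mul_one]
    have habs : ‖deriv F 0‖ = ‖deriv g 0 / g 0‖ / (2 * b.re) := by
      rw [e0, norm_div, norm_neg, Complex.norm_real, Real.norm_eq_abs, _root_.abs_of_pos hc0]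
    rw [habs] at hschwarz
    rw [div_le_iff₀ hc0] at hschwarz
    calc ‖deriv g 0 / g 0‖ ≤ 1 / 1 * (2 * b.re) := hschwarz
      _ = 2 * (ε - (h 0).re) := by
          simp only [hb_def, Complex.sub_re, Complex.ofReal_re]
          ring
  -- pass to the limit ε → 0
  have hlim : ‖deriv g 0 / g 0‖ ≤ 2 * (-(h 0).re) := by
    apply le_of_forall_pos_le_add
    intro ε hε
    calc ‖deriv g 0 / g 0‖ ≤ 2 * (ε / 2 - (h 0).re) := main (ε / 2) (by linarith)
      _ = 2 * (-(h 0).re) + ε := by ring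
  -- conclude
  have hg0 : g 0 ≠ 0 := hne 0 h0ball
  have habs0 : 0 < ‖g 0‖ := hpos 0 h0ball
  have hlog : -(h 0).re = Real.log (1 / ‖g 0‖) := by
    rw [hre 0 h0ball, one_div, Real.log_inv]
  have : ‖deriv g 0 / g 0‖ = ‖deriv g 0‖ / ‖g 0‖ :=
    norm_div _ _
  rw [this, hlog] at hlim
  rw [div_le_iff₀ habs0] at hlim
  calc ‖deriv g 0‖
      ≤ 2 * Real.log (1 / ‖g 0‖) * ‖g 0‖ := hlim
    _ = 2 * ‖g 0‖ * Real.log (1 / ‖g 0‖) := by ring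
end

section
/- Let f be holomorphic on the open unit disk D, z ∈ D with f nowhere zero on B_z = {w : |w - z| < d_z/2}, where d_z = 1 - |z|, and let M_f(z) = sup{|f(w)| : w ∈ B_z}. Then (d_z/2)|f'(z)| ≤ 2 |f(z)| log(M_f(z)/|f(z)|). -/
open Set Metric intervalIntegral Complex

lemma exists_holomorphic_log_s10 {f : ℂ → ℂ} {c : ℂ} {R : ℝ} (hR : 0 < R)
    (hf : ∀ w ∈ ball c R, DifferentiableAt ℂ f w)
    (hnz : ∀ w ∈ ball c R, f w ≠ 0) :
    ∃ h : ℂ → ℂ, (∀ w ∈ ball c R, Complex.exp (h w) = f w) ∧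
      (∀ w ∈ ball c R, HasDerivAt h (deriv f w / f w) w) := by
  set B := ball c R with hB
  have hBo : IsOpen B := isOpen_ball
  have hcB : c ∈ B := mem_ball_self hR
  set q : ℂ → ℂ := fun u => deriv f u / f u with hq
  have hfd : DifferentiableOn ℂ f B := fun w hw => (hf w hw).differentiableWithinAt
  have hqc : ContinuousOn q B := by
    have h1 : AnalyticOnNhd ℂ f B := hfd.analyticOnNhd hBo
    have h2 : DifferentiableOn ℂ (deriv f) B := h1.deriv.differentiableOn
    exact h2.continuousOn.div hfd.continuousOn hnz
  set h : ℂ → ℂ := fun w =>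
    Complex.log (f c) + (w - c) * ∫ t in (0:ℝ)..1, q (AffineMap.lineMap c w t) with hh
  -- Step A : exp ∘ h = f on B
  have hexp : ∀ w ∈ B, Complex.exp (h w) = f w := by
    intro w hw
    set L : ℝ → ℂ := fun t => (AffineMap.lineMap c w t : ℂ) with hLdef
    have hLt : ∀ t : ℝ, L t = t • (w - c) + c := by
      intro t; simp [hLdef, AffineMap.lineMap_apply]
    have hLcont : Continuous L := AffineMap.lineMap_continuous
    set U : Set ℝ := L ⁻¹' B with hU
    have hUo : IsOpen U := isOpen_ball.preimage hLcont
    have hUc : Convex ℝ U := (convex_ball c R).affine_preimage (AffineMap.lineMap c w)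
    have hIccU : Icc (0:ℝ) 1 ⊆ U := by
      intro t ht
      simp only [hU, mem_preimage, hB, mem_ball, hLt]
      rw [dist_eq_norm]
      rw [add_sub_cancel_right, norm_smul]
      calc ‖t‖ * ‖w - c‖ ≤ 1 * ‖w - c‖ := by
            apply mul_le_mul_of_nonneg_right _ (norm_nonneg _)
            rw [Real.norm_eq_abs, abs_le]; exact ⟨by linarith [ht.1], ht.2⟩
        _ < R := by rw [one_mul, ← dist_eq_norm]; exact mem_ball.mp hw
    set ψ : ℝ → ℂ := fun t => q (L t) with hψdef
    have hψc : ContinuousOn ψ U := hqc.comp hLcont.continuousOn (fun t ht => ht)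
    set G : ℝ → ℂ := fun t =>
      Complex.log (f c) + (w - c) * ∫ s in (0:ℝ)..t, ψ s with hG
    set Φ : ℝ → ℂ := fun t => f (L t) * Complex.exp (-(G t)) with hΦ
    have hΦ' : ∀ t ∈ U, HasDerivAt Φ 0 t := by
      intro t ht
      have h0U : (0:ℝ) ∈ U := hIccU ⟨le_refl _, zero_le_one⟩
      have hLder : HasDerivAt L (w - c) t := by
        have : HasDerivAt (fun s : ℝ => s • (w - c) + c) ((1:ℝ) • (w - c)) t :=
          ((hasDerivAt_id t).smul_const (w - c)).add_const c
        rw [one_smul] at this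
        exact this.congr_of_eventuallyEq (Filter.Eventually.of_forall fun s => (hLt s))
      have hfL : HasDerivAt f (deriv f (L t)) (L t) := (hf _ ht).hasDerivAt
      have hcomp : HasDerivAt (fun s => f (L s)) ((w - c) • deriv f (L t)) t :=
        (hfL.scomp t hLder : HasDerivAt (f ∘ L) _ t)
      have hint : IntervalIntegrable ψ MeasureTheory.volume 0 t :=
        (hψc.mono (hUc.ordConnected.uIcc_subset h0U ht)).intervalIntegrable
      have hFTC : HasDerivAt (fun u => ∫ s in (0:ℝ)..u, ψ s) (ψ t) t :=
        integral_hasDerivAt_right hint (hψc.stronglyMeasurableAtFilter hUo t ht)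
          (hψc.continuousAt (hUo.mem_nhds ht))
      have hGder : HasDerivAt G ((w - c) * ψ t) t :=
        ((hFTC.const_mul (w - c)).const_add _)
      have hE : HasDerivAt (fun s => Complex.exp (-(G s)))
          (Complex.exp (-(G t)) * -((w - c) * ψ t)) t := hGder.neg.cexp
      have := hcomp.mul hE
      convert this using 1
      · rfl
      · rfl
      have hfnz : f (L t) ≠ 0 := hnz _ ht
      simp only [hψdef, hq, smul_eq_mul]
      field_simp
      ring
    have hΦconst : Φ 1 = Φ 0 := by
      have hc : ContinuousOn Φ (Icc 0 1) := fun t ht =>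
        ((hΦ' t (hIccU ht)).continuousAt).continuousWithinAt
      have hd : ∀ t ∈ Ico (0:ℝ) 1, HasDerivWithinAt Φ 0 (Ici t) t := fun t ht =>
        (hΦ' t (hIccU (Ico_subset_Icc_self ht))).hasDerivWithinAt
      exact constant_of_has_deriv_right_zero hc hd 1 ⟨zero_le_one, le_refl _⟩
    have hL0 : L 0 = c := by rw [hLt]; simp
    have hL1 : L 1 = w := by rw [hLt]; simp
    have hG0 : G 0 = Complex.log (f c) := by simp [hG]
    have hΦ0 : Φ 0 = 1 := by
      simp only [hΦ, hL0, hG0]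
      rw [Complex.exp_neg, Complex.exp_log (hnz c (mem_ball_self hR))]
      exact mul_inv_cancel₀ (hnz c (mem_ball_self hR))
    rw [hΦ0] at hΦconst
    have hkey : f w * Complex.exp (-(G 1)) = 1 := by rw [← hL1]; exact hΦconst
    rw [Complex.exp_neg] at hkey
    have hEne : Complex.exp (G 1) ≠ 0 := Complex.exp_ne_zero _
    have hfw : f w = Complex.exp (G 1) := (mul_inv_eq_one₀ hEne).mp hkey
    rw [hfw]
  -- Step B : h is continuous on B
  have hhc : ContinuousOn h B := by
    have key : ∀ w₀ ∈ B, ContinuousAt h w₀ := by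
      intro w₀ hw₀
      set ρ : ℝ := (dist w₀ c + R) / 2 with hρ
      have hd : dist w₀ c < R := mem_ball.mp hw₀
      have hρ1 : dist w₀ c < ρ := by rw [hρ]; linarith
      have hρ2 : ρ < R := by rw [hρ]; linarith
      have hρ0 : 0 ≤ ρ := by have := dist_nonneg (x := w₀) (y := c); rw [hρ]; linarith
      have hsub : closedBall c ρ ⊆ B := by
        rw [hB]; exact closedBall_subset_ball hρ2
      obtain ⟨Q, hQ⟩ := ContinuousMap.exists_restrict_eq (Metric.isClosed_closedBall (x := c) (ε := ρ))
        ⟨_, (hqc.mono hsub).restrict⟩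
      have hQeq : ∀ x ∈ closedBall c ρ, Q x = q x := by
        intro x hx
        have := congrFun (congrArg DFunLike.coe hQ) ⟨x, hx⟩
        simpa using this
      set htil : ℂ → ℂ := fun w =>
        Complex.log (f c) + (w - c) * ∫ t in (0:ℝ)..1, Q (AffineMap.lineMap c w t) with hhtil
      have hQc : Continuous (Q : ℂ → ℂ) := Q.continuous
      have hcont : Continuous htil := by
        apply continuous_const.add
        apply (continuous_id.sub continuous_const).mul
        have huncurry : Continuous (Function.uncurry fun (w : ℂ) (t : ℝ) =>
            Q (AffineMap.lineMap c w t)) := by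
          apply hQc.comp
          simp only [Function.uncurry, AffineMap.lineMap_apply, vsub_eq_sub, vadd_eq_add]
          fun_prop
        exact continuous_parametric_intervalIntegral_of_continuous' huncurry 0 1
      have heq : EqOn h htil (ball c ρ) := by
        intro w hw
        simp only [hh, hhtil]
        congr 1
        congr 1
        apply intervalIntegral.integral_congr
        intro t ht
        rw [uIcc_of_le zero_le_one] at ht
        have hmem : (AffineMap.lineMap c w t : ℂ) ∈ closedBall c ρ := by
          simp only [mem_closedBall, AffineMap.lineMap_apply, vsub_eq_sub, vadd_eq_add]
          rw [dist_eq_norm, add_sub_cancel_right, norm_smul]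
          calc ‖t‖ * ‖w - c‖ ≤ 1 * ‖w - c‖ := by
                apply mul_le_mul_of_nonneg_right _ (norm_nonneg _)
                rw [Real.norm_eq_abs, abs_le]; exact ⟨by linarith [ht.1], ht.2⟩
            _ ≤ ρ := by rw [one_mul, ← dist_eq_norm]; exact (mem_ball.mp hw).le
        exact (hQeq _ hmem).symm
      have : ContinuousOn h (ball c ρ) := hcont.continuousOn.congr heq
      exact this.continuousAt (isOpen_ball.mem_nhds (mem_ball.mpr hρ1))
    exact fun w hw => (key w hw).continuousWithinAt
  -- Step C : h is differentiable with derivative f'/f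
  refine ⟨h, hexp, ?_⟩
  intro w₀ hw₀
  have hfw₀ : f w₀ ≠ 0 := hnz w₀ hw₀
  set p : ℂ → ℂ := fun w => h w₀ + Complex.log (f w / f w₀) with hp
  set V : Set ℂ := B ∩ (fun w => f w / f w₀) ⁻¹' ball (1:ℂ) 1 with hV
  have hfc : ContinuousOn (fun w => f w / f w₀) B :=
    fun w hw => ((hf w hw).continuousAt.div_const _).continuousWithinAt
  have hVo : IsOpen V := hfc.isOpen_inter_preimage isOpen_ball isOpen_ball
  have hw₀V : w₀ ∈ V := by
    refine ⟨hw₀, ?_⟩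
    simp [div_self hfw₀]
  have hslit : ∀ u : ℂ, u ∈ ball (1:ℂ) 1 → u ∈ Complex.slitPlane := by
    intro u hu
    rw [mem_ball, dist_eq_norm] at hu
    have h1 : |(u - 1).re| ≤ ‖u - 1‖ := Complex.abs_re_le_norm _
    have hre : (u - 1).re = u.re - 1 := by simp
    rw [Complex.mem_slitPlane_iff]
    left
    have h2 : |(u - 1).re| < 1 := lt_of_le_of_lt h1 hu
    rw [hre] at h2
    have h3 := (abs_lt.mp h2).1
    linarith
  have hVslit : ∀ w ∈ V, f w / f w₀ ∈ Complex.slitPlane := fun w hw => hslit _ hw.2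
  have hpc : ContinuousOn p V := by
    apply ContinuousOn.add continuousOn_const
    intro w hw
    have hcomp := ContinuousAt.comp (g := Complex.log) (f := fun w => f w / f w₀) (x := w)
      (continuousAt_clog (hVslit w hw)) ((hf w hw.1).continuousAt.div_const _)
    exact hcomp.continuousWithinAt
  have hpexp : ∀ w ∈ V, Complex.exp (p w) = f w := by
    intro w hw
    rw [hp]
    simp only
    rw [Complex.exp_add, hexp w₀ hw₀, Complex.exp_log (div_ne_zero (hnz w hw.1) hfw₀)]
    field_simp
  set D : ℂ → ℂ := fun w => h w - p w with hD
  have hDc : ContinuousOn D V := (hhc.mono (inter_subset_left)).sub hpc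
  have hDint : ∀ w ∈ V, ∃ n : ℤ, D w = n * (2 * Real.pi * Complex.I) := by
    intro w hw
    have : Complex.exp (D w) = 1 := by
      rw [hD]; simp only
      rw [Complex.exp_sub, hexp w hw.1, hpexp w hw, div_self (hnz w hw.1)]
    exact Complex.exp_eq_one_iff.mp this
  have hDw₀ : D w₀ = 0 := by
    rw [hD]; simp only [hp]
    rw [div_self hfw₀, Complex.log_one]
    ring
  have hev : ∀ᶠ w in nhds w₀, h w = p w := by
    have hten : Filter.Tendsto D (nhds w₀) (nhds 0) := by
      rw [← hDw₀]
      exact (hDc.continuousAt (hVo.mem_nhds hw₀V)).tendsto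
    have h2pi : (0:ℝ) < 2 * Real.pi := by positivity
    have hsmall : ∀ᶠ w in nhds w₀, ‖D w‖ < 2 * Real.pi := by
      have := hten (Metric.ball_mem_nhds 0 h2pi)
      filter_upwards [this] with w hw
      rw [mem_preimage, mem_ball, dist_eq_norm, sub_zero] at hw
      exact hw
    filter_upwards [hsmall, hVo.mem_nhds hw₀V] with w hw hwV
    obtain ⟨n, hn⟩ := hDint w hwV
    have habs : ‖D w‖ = |(n:ℝ)| * (2 * Real.pi) := by
      rw [hn]
      simp [Complex.norm_exp, abs_mul, Complex.norm_I, mul_assoc, Real.pi_pos.le]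
    rw [habs] at hw
    have hn0 : n = 0 := by
      by_contra hne
      have : (1:ℝ) ≤ |(n:ℝ)| := by
        rw [← Int.cast_abs]
        exact_mod_cast Int.one_le_abs hne
      nlinarith
    have hDw : D w = 0 := by rw [hn, hn0]; simp
    exact sub_eq_zero.mp hDw
  have hpder : HasDerivAt p (deriv f w₀ / f w₀) w₀ := by
    have h1 : HasDerivAt (fun w => f w / f w₀) (deriv f w₀ / f w₀) w₀ :=
      (hf w₀ hw₀).hasDerivAt.div_const _
    have h2 := (h1.clog (hVslit w₀ hw₀V)).const_add (h w₀)
    rw [div_self hfw₀, div_one] at h2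
    exact h2
  exact hpder.congr_of_eventuallyEq hev

theorem schwarz_pick_local (f : ℂ → ℂ) (z : ℂ)
    (hf : DifferentiableOn ℂ f (ball (0 : ℂ) 1))
    (hz : z ∈ ball (0 : ℂ) 1)
    (hnz : ∀ w ∈ ball z ((1 - ‖z‖) / 2), f w ≠ 0) :
    (1 - ‖z‖) / 2 * ‖deriv f z‖ ≤
      2 * ‖f z‖ *
        Real.log (sSup ((fun w => ‖f w‖) '' ball z ((1 - ‖z‖) / 2))
          / ‖f z‖) := by
  have hz1 : ‖z‖ < 1 := by simpa using mem_ball_zero_iff.mp hz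
  set r : ℝ := (1 - ‖z‖) / 2 with hr
  have hr0 : 0 < r := by rw [hr]; linarith
  set B := ball z r with hB
  have hzB : z ∈ B := mem_ball_self hr0
  have hsub : closedBall z r ⊆ ball (0:ℂ) 1 := by
    intro w hw
    rw [mem_closedBall, dist_eq_norm] at hw
    rw [mem_ball_zero_iff]
    calc ‖w‖ = ‖w - z + z‖ := by ring_nf
      _ ≤ ‖w - z‖ + ‖z‖ := norm_add_le _ _
      _ < 1 := by
          have hzn : ‖z‖ = ‖z‖ := rfl
          rw [hzn]; rw [hr] at hw; linarith
  have hBsub : B ⊆ ball (0:ℂ) 1 := (ball_subset_closedBall).trans hsub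
  have hfd : ∀ w ∈ B, DifferentiableAt ℂ f w := fun w hw =>
    hf.differentiableAt (isOpen_ball.mem_nhds (hBsub hw))
  set M := sSup ((fun w => ‖f w‖) '' B) with hM
  have himg : ((fun w => ‖f w‖) '' B).Nonempty :=
    ⟨_, mem_image_of_mem _ hzB⟩
  have hbdd : BddAbove ((fun w => ‖f w‖) '' B) := by
    have hcomp : IsCompact (closedBall z r) := isCompact_closedBall _ _
    have hcont : ContinuousOn (fun w => ‖f w‖) (closedBall z r) :=
      continuous_norm.comp_continuousOn ((hf.mono hsub).continuousOn)
    exact ((hcomp.image_of_continuousOn hcont).bddAbove).mono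
      (image_mono ball_subset_closedBall)
  have hle : ∀ w ∈ B, ‖f w‖ ≤ M := fun w hw => le_csSup hbdd ⟨w, hw, rfl⟩
  have hfz : f z ≠ 0 := hnz z hzB
  have hfza : 0 < ‖f z‖ := norm_pos_iff.mpr hfz
  have hMz : ‖f z‖ ≤ M := hle z hzB
  have hM0 : 0 < M := lt_of_lt_of_le hfza hMz
  by_cases hcase : ∀ w ∈ B, ‖f w‖ ≤ ‖f z‖
  · -- constant case : both sides are zero
    have hMeq : M = ‖f z‖ :=
      le_antisymm (csSup_le himg (by rintro x ⟨w, hw, rfl⟩; exact hcase w hw)) hMz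
    have hconst : EqOn f (Function.const ℂ (f z)) B :=
      Complex.eqOn_of_isPreconnected_of_isMaxOn_norm (convex_ball z r).isPreconnected
        isOpen_ball (fun w hw => (hfd w hw).differentiableWithinAt) hzB
        (fun w hw => by simpa using hcase w hw)
    have hder0 : deriv f z = 0 := by
      have hev : f =ᶠ[nhds z] fun _ => f z :=
        Filter.eventuallyEq_of_mem (isOpen_ball.mem_nhds hzB) hconst
      rw [hev.deriv_eq, deriv_const]
    rw [hder0, hMeq]
    simp [div_self hfza.ne']
  · push_neg at hcase
    obtain ⟨w₁, hw₁B, hw₁⟩ := hcase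
    have hMgt : ‖f z‖ < M := lt_of_lt_of_le hw₁ (hle w₁ hw₁B)
    obtain ⟨h, hexp, hder⟩ := exists_holomorphic_log_s10 hr0 hfd hnz
    set Lg := Real.log M with hLg
    have habs : ∀ w ∈ B, Real.exp ((h w).re) = ‖f w‖ := fun w hw => by
      rw [← hexp w hw, Complex.norm_exp]
    have hre : ∀ w ∈ B, (h w).re ≤ Lg := by
      intro w hw
      have : Real.exp ((h w).re) ≤ Real.exp Lg := by
        rw [Real.exp_log hM0, habs w hw]; exact hle w hw
      exact Real.exp_le_exp.mp this
    have hrez : (h z).re < Lg := by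
      have : Real.exp ((h z).re) < Real.exp Lg := by
        rw [Real.exp_log hM0, habs z hzB]; exact hMgt
      exact Real.exp_lt_exp.mp this
    set A := (h z).re with hA
    set v : ℂ → ℂ := fun w => h w + (starRingEnd ℂ) (h z) - ((2 * Lg : ℝ) : ℂ) with hv
    have hvrew : ∀ w, (v w).re = (h w).re + A - 2 * Lg := by
      intro w; simp [hv, Complex.add_re, Complex.sub_re, Complex.conj_re, Complex.ofReal_re, hA]
    have hvim : ∀ w, (v w).im = (h w).im - (h z).im := by
      intro w
      simp [hv, Complex.add_im, Complex.sub_im, Complex.conj_im, Complex.ofReal_im]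
      ring
    have hvne : ∀ w ∈ B, v w ≠ 0 := by
      intro w hw hv0
      have h1 : (v w).re = 0 := by rw [hv0]; simp
      rw [hvrew w] at h1
      have := hre w hw
      linarith
    set k : ℂ → ℂ := fun w => (h w - h z) / v w with hk
    have hkz : k z = 0 := by simp [hk, sub_self]
    have hkle : ∀ w ∈ B, ‖k w‖ ≤ 1 := by
      intro w hw
      rw [hk]
      simp only
      rw [norm_div, div_le_one (norm_pos_iff.mpr (hvne w hw))]
      have hsq : Complex.normSq (h w - h z) ≤ Complex.normSq (v w) := by
        rw [Complex.normSq_apply, Complex.normSq_apply, Complex.sub_re, Complex.sub_im,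
          hvrew w, hvim w]
        have h1 := hre w hw
        have h2 := hrez
        nlinarith [mul_nonneg (sub_pos.mpr hrez).le (sub_nonneg.mpr (hre w hw))]
      calc ‖h w - h z‖ = Real.sqrt (Complex.normSq (h w - h z)) := by
            rw [Complex.norm_def]
        _ ≤ Real.sqrt (Complex.normSq (v w)) := Real.sqrt_le_sqrt hsq
        _ = ‖v w‖ := by rw [Complex.norm_def]
    have hkd : DifferentiableOn ℂ k B := by
      apply DifferentiableOn.div
      · exact fun w hw => ((hder w hw).differentiableAt.sub_const _).differentiableWithinAt
      · exact fun w hw =>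
          (((hder w hw).differentiableAt.add_const _).sub_const _).differentiableWithinAt
      · exact hvne
    have hschwarz : ‖deriv k z‖ ≤ 1 / r := by
      apply le_of_forall_pos_le_add
      intro ε hε
      have hmaps : MapsTo k B (ball (k z) (1 + ε * r)) := by
        intro w hw
        rw [hkz, mem_ball_zero_iff]
        have h1 := hkle w hw
        have h2 : (0:ℝ) < ε * r := mul_pos hε hr0
        calc ‖k w‖ = ‖k w‖ := rfl
          _ ≤ 1 := h1
          _ < 1 + ε * r := by linarith
      have hS := Complex.norm_deriv_le_div_of_mapsTo_ball hkd (hmaps.mono_right ball_subset_closedBall) hr0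
      calc ‖deriv k z‖ ≤ (1 + ε * r) / r := hS
        _ = 1 / r + ε := by field_simp
    -- compute deriv k z
    have hnum : HasDerivAt (fun w => h w - h z) (deriv f z / f z) z :=
      (hder z hzB).sub_const _
    have hden : HasDerivAt v (deriv f z / f z) z :=
      ((hder z hzB).add_const _).sub_const _
    have hkder := hnum.div hden (hvne z hzB)
    have hkderval : deriv k z = (deriv f z / f z) / v z := by
      rw [show k = (fun w => h w - h z) / v from rfl, hkder.deriv, sub_self, zero_mul, sub_zero, sq]
      have hvz := hvne z hzB
      field_simp
    have hvzval : v z = ((2*A - 2*Lg : ℝ) : ℂ) := by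
      apply Complex.ext
      · rw [hvrew z]; simp only [Complex.ofReal_re]; rw [hA]; ring
      · rw [hvim z]; simp
    have habsvz : ‖v z‖ = 2 * (Lg - A) := by
      rw [hvzval, Complex.norm_real, Real.norm_eq_abs, abs_of_neg (by linarith : 2*A - 2*Lg < 0)]
      ring
    have hfinal : ‖deriv f z‖ / ‖f z‖ / (2 * (Lg - A)) ≤ 1 / r := by
      calc ‖deriv f z‖ / ‖f z‖ / (2 * (Lg - A))
          = ‖deriv k z‖ := by rw [hkderval, norm_div, norm_div, habsvz]
        _ ≤ 1 / r := hschwarz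
    have hlog : Real.log (M / ‖f z‖) = Lg - A := by
      rw [Real.log_div hM0.ne' hfza.ne']
      congr 1
      rw [← habs z hzB, Real.log_exp]
    rw [hlog]
    have hC : (0:ℝ) < 2 * (Lg - A) := by linarith
    rw [div_le_div_iff₀ hC hr0] at hfinal
    rw [div_mul_eq_mul_div, div_le_iff₀ hfza] at hfinal
    nlinarith [hfinal]
end

section
/- Let ω : (0,1] → (0,∞) be moderate and f holomorphic on the open unit disk D. Suppose there is C₃ > 0 such that for every z ∈ D: if f has a zero in B_z then M_f(z) ≤ C₃ ω(d_z), and if f has no zero in B_z then |f(z)| log(M_f(z)/|f(z)|) ≤ C₃ ω(d_z). Then there exists C > 0 with |f'(z)| ≤ C ω(d_z)/d_z for all z ∈ D. -/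
open Set Metric
open scoped NNReal ENNReal

/-- Primitive of a holomorphic function on a slightly smaller ball. -/
lemma exists_primitive_aux {F : ℂ → ℂ} {c : ℂ} {ρ R : ℝ} (hρ : 0 < ρ) (hρR : ρ < R)
    (hF : DifferentiableOn ℂ F (ball c R)) :
    ∃ g : ℂ → ℂ, g c = 0 ∧ ∀ w ∈ ball c ρ, HasDerivAt g (F w) w := by
  set R' : ℝ := (ρ + R) / 2 with hR'def
  have hρR' : ρ < R' := by simp only [hR'def]; linarith
  have hR'pos : 0 < R' := hρ.trans hρR'
  have hR'R : R' < R := by simp only [hR'def]; linarith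
  have hcoe : ((R'.toNNReal : ℝ≥0) : ℝ) = R' := Real.coe_toNNReal _ hR'pos.le
  have hp : HasFPowerSeriesOnBall F (cauchyPowerSeries F c R'.toNNReal) c R'.toNNReal := by
    refine DifferentiableOn.hasFPowerSeriesOnBall ?_ (by simpa using hR'pos)
    refine hF.mono ?_
    rw [hcoe]
    exact closedBall_subset_ball hR'R
  set p := cauchyPowerSeries F c R'.toNNReal with hpdef
  have hrad : (ρ.toNNReal : ℝ≥0∞) < p.radius := by
    refine lt_of_lt_of_le ?_ hp.r_le
    rw [ENNReal.coe_lt_coe]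
    rw [← Real.toNNReal_coe (r := R'.toNNReal), hcoe]
    exact (Real.toNNReal_lt_toNNReal_iff hR'pos).mpr hρR'
  have hsum : Summable fun n => ‖p.coeff n‖ * ρ ^ n := by
    have := p.summable_norm_mul_pow hrad
    simpa [FormalMultilinearSeries.norm_apply_eq_norm_coef,
      Real.coe_toNNReal _ hρ.le] using this
  set gn : ℕ → ℂ → ℂ := fun n w => p.coeff n / ((n : ℂ) + 1) * (w - c) ^ (n + 1) with hgn
  set gn' : ℕ → ℂ → ℂ := fun n w => p.coeff n * (w - c) ^ n with hgn'
  have hder : ∀ n, ∀ w : ℂ, HasDerivAt (gn n) (gn' n w) w := by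
    intro n w
    have h1 : HasDerivAt (fun w : ℂ => (w - c) ^ (n + 1))
        (((n : ℂ) + 1) * (w - c) ^ n) w := by
      have := ((hasDerivAt_pow (n + 1) (w - c)).comp w
        ((hasDerivAt_id w).sub_const c))
      simpa [mul_comm, Function.comp_def] using this
    have := h1.const_mul (p.coeff n / ((n : ℂ) + 1))
    refine this.congr_deriv ?_
    have hne : ((n : ℂ) + 1) ≠ 0 := Nat.cast_add_one_ne_zero n
    field_simp [hgn']
    ring
  have hbound : ∀ n, ∀ w ∈ ball c ρ, ‖gn' n w‖ ≤ ‖p.coeff n‖ * ρ ^ n := by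
    intro n w hw
    have hlt : ‖w - c‖ ≤ ρ := by
      rw [mem_ball, dist_eq_norm] at hw; exact hw.le
    calc ‖gn' n w‖ = ‖p.coeff n‖ * ‖w - c‖ ^ n := by
          simp [hgn', norm_mul, norm_pow]
      _ ≤ ‖p.coeff n‖ * ρ ^ n := by gcongr
  have hg0 : Summable fun n => gn n c := by
    have : (fun n => gn n c) = fun _ => (0 : ℂ) := by
      funext n; simp [hgn]
    rw [this]; exact summable_zero
  refine ⟨fun w => ∑' n, gn n w, ?_, ?_⟩
  · show (∑' n, gn n c) = 0
    rw [show (fun n => gn n c) = fun _ => (0 : ℂ) by funext n; simp [hgn]]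
    exact tsum_zero
  · intro w hw
    have H := hasDerivAt_tsum_of_isPreconnected hsum isOpen_ball
      (convex_ball c ρ).isPreconnected (fun n w _ => hder n w) hbound (mem_ball_self hρ) hg0 hw
    have hsumF : HasSum (fun n => gn' n w) (F w) := by
      have hmem : (w - c) ∈ Metric.eball (0 : ℂ) R'.toNNReal := by
        rw [Metric.mem_eball, edist_zero_right, enorm_eq_nnnorm]
        rw [show ((R'.toNNReal : ℝ≥0) : ℝ≥0∞) = ENNReal.ofReal R' by
          simp [ENNReal.ofReal]]
        rw [← ENNReal.ofReal_coe_nnreal]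
        refine ENNReal.ofReal_lt_ofReal_iff_of_nonneg (norm_nonneg _) |>.mpr ?_
        have : dist w c < ρ := mem_ball.mp hw
        rw [dist_eq_norm] at this
        calc (‖w - c‖₊ : ℝ) = ‖w - c‖ := rfl
          _ < ρ := this
          _ < R' := hρR'
      have := hp.hasSum hmem
      simp only [FormalMultilinearSeries.apply_eq_pow_smul_coeff, smul_eq_mul,
        add_sub_cancel] at this
      refine this.congr_fun fun n => ?_
      simp [hgn', mul_comm]
    rw [hsumF.tsum_eq] at H
    exact H

/-- Holomorphic logarithm of a nonvanishing holomorphic function, on a smaller ball. -/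
lemma exists_log_aux {f : ℂ → ℂ} {c : ℂ} {ρ R : ℝ} (hρ : 0 < ρ) (hρR : ρ < R)
    (hf : DifferentiableOn ℂ f (ball c R)) (hne : ∀ w ∈ ball c R, f w ≠ 0) :
    ∃ g : ℂ → ℂ, g c = 0 ∧ (∀ w ∈ ball c ρ, HasDerivAt g (deriv f w / f w) w) ∧
      ∀ w ∈ ball c ρ, f w = f c * Complex.exp (g w) := by
  have hF : DifferentiableOn ℂ (fun w => deriv f w / f w) (ball c R) := by
    have hd : DifferentiableOn ℂ (deriv f) (ball c R) :=
      ((hf.analyticOnNhd isOpen_ball).deriv).differentiableOn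
    exact hd.div hf hne
  obtain ⟨g, hgc, hg⟩ := exists_primitive_aux hρ hρR hF
  refine ⟨g, hgc, hg, ?_⟩
  have hsub : ball c ρ ⊆ ball c R := ball_subset_ball hρR.le
  set u : ℂ → ℂ := fun w => f w * Complex.exp (-g w) with hu
  have hu0 : ∀ w ∈ ball c ρ, HasDerivAt u 0 w := by
    intro w hw
    have hfw : HasDerivAt f (deriv f w) w :=
      (hf.differentiableAt (isOpen_ball.mem_nhds (hsub hw))).hasDerivAt
    have hgw := hg w hw
    have hew : HasDerivAt (fun w => Complex.exp (-g w))
        (Complex.exp (-g w) * -(deriv f w / f w)) w := (hgw.neg).cexp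
    have := hfw.mul hew
    refine this.congr_deriv ?_
    have hfne : f w ≠ 0 := hne w (hsub hw)
    field_simp
    ring
  have hconst : ∀ w ∈ ball c ρ, u w = u c := by
    intro w hw
    refine Convex.is_const_of_fderivWithin_eq_zero (convex_ball c ρ)
      (fun y hy => (hu0 y hy).differentiableAt.differentiableWithinAt) ?_ hw
      (mem_ball_self hρ)
    intro y hy
    have := (hu0 y hy).hasFDerivAt
    rw [fderivWithin_of_isOpen isOpen_ball hy, this.fderiv]
    ext v
    simp
  intro w hw
  have h1 : u w = f c := by
    rw [hconst w hw, hu]; simp [hgc]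
  have h2 : f w * Complex.exp (-g w) = f c := h1
  have hexp : Complex.exp (-g w) ≠ 0 := Complex.exp_ne_zero _
  field_simp [Complex.exp_neg] at h2 ⊢
  rw [← h2, mul_assoc, ← Complex.exp_add, neg_add_cancel, Complex.exp_zero, mul_one]

/-- Borel–Carathéodory-type estimate for the derivative of a nonvanishing function. -/
lemma deriv_bound_aux {f : ℂ → ℂ} {c : ℂ} {ρ R M : ℝ} (hρ : 0 < ρ) (hρR : ρ < R)
    (hf : DifferentiableOn ℂ f (ball c R)) (hne : ∀ w ∈ ball c R, f w ≠ 0)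
    (hM : ∀ w ∈ ball c ρ, ‖f w‖ < M) :
    ‖deriv f c‖ * ρ ≤
      2 * (‖f c‖ * Real.log (M / ‖f c‖)) := by
  obtain ⟨g, hgc, hg, hfg⟩ := exists_log_aux hρ hρR hf hne
  have hsub : ball c ρ ⊆ ball c R := ball_subset_ball hρR.le
  have hcmem : c ∈ ball c ρ := mem_ball_self hρ
  have hfc : f c ≠ 0 := hne c (hsub hcmem)
  have hfc_pos : 0 < ‖f c‖ := norm_pos_iff.mpr hfc
  have hfw_pos : ∀ w ∈ ball c ρ, 0 < ‖f w‖ :=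
    fun w hw => norm_pos_iff.mpr (hne w (hsub hw))
  have hMpos : 0 < M := hfc_pos.trans (hM c hcmem)
  set H : ℂ → ℂ := fun w =>
    ((Real.log M : ℂ) - (Real.log (‖f c‖) : ℂ)) - g w with hH
  -- real part of H
  have hre : ∀ w ∈ ball c ρ, (H w).re = Real.log M - Real.log (‖f w‖) := by
    intro w hw
    have habs : ‖f w‖ = ‖f c‖ * Real.exp ((g w).re) := by
      rw [hfg w hw, norm_mul, Complex.norm_exp]
    have hlog : Real.log (‖f w‖) =
        Real.log (‖f c‖) + (g w).re := by
      rw [habs, Real.log_mul hfc_pos.ne' (Real.exp_pos _).ne', Real.log_exp]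
    simp [hH, hlog]
    ring
  have hre_pos : ∀ w ∈ ball c ρ, 0 < (H w).re := by
    intro w hw
    rw [hre w hw, sub_pos]
    exact Real.log_lt_log (hfw_pos w hw) (hM w hw)
  set a : ℂ := H c with ha
  have ha_pos : 0 < a.re := hre_pos c hcmem
  have ha_re : a.re = Real.log (M / ‖f c‖) := by
    rw [ha, hre c hcmem, Real.log_div hMpos.ne' hfc_pos.ne']
  -- denominator nonzero
  have hden : ∀ w ∈ ball c ρ, H w + (starRingEnd ℂ) a ≠ 0 := by
    intro w hw h0
    have : (H w + (starRingEnd ℂ) a).re = 0 := by rw [h0]; simp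
    rw [Complex.add_re, Complex.conj_re] at this
    have := hre_pos w hw
    linarith
  set G : ℂ → ℂ := fun w => (H w - a) / (H w + (starRingEnd ℂ) a) with hG
  have hGc : G c = 0 := by simp [hG, ← ha]
  -- differentiability of H and G on the ball
  have hHdiff : DifferentiableOn ℂ H (ball c ρ) := by
    intro w hw
    exact (((hg w hw).const_sub _).differentiableAt).differentiableWithinAt
  have hGdiff : DifferentiableOn ℂ G (ball c ρ) :=
    (hHdiff.sub_const a).div (hHdiff.add_const _) hden
  -- G maps into the unit ball centered at G c = 0
  have hmaps : MapsTo G (ball c ρ) (ball (G c) 1) := by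
    intro w hw
    rw [hGc, mem_ball, dist_zero_right, hG]
    have hd := hden w hw
    have habs_pos : 0 < ‖H w + (starRingEnd ℂ) a‖ := norm_pos_iff.mpr hd
    rw [norm_div, div_lt_one habs_pos]
    have hsq : Complex.normSq (H w - a) < Complex.normSq (H w + (starRingEnd ℂ) a) := by
      have e1 : Complex.normSq (H w - a) =
          Complex.normSq (H w) + Complex.normSq a - 2 * (H w * (starRingEnd ℂ) a).re :=
        Complex.normSq_sub _ _
      have e2 : Complex.normSq (H w + (starRingEnd ℂ) a) =
          Complex.normSq (H w) + Complex.normSq a + 2 * (H w * a).re := by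
        have := Complex.normSq_add (H w) ((starRingEnd ℂ) a)
        simpa [Complex.normSq_conj] using this
      have key : 0 < (H w * a).re + (H w * (starRingEnd ℂ) a).re := by
        have : (H w * a).re + (H w * (starRingEnd ℂ) a).re
            = (H w).re * (2 * a.re) := by
          simp [Complex.mul_re, Complex.conj_re, Complex.conj_im]
          ring
        rw [this]
        exact mul_pos (hre_pos w hw) (by linarith)
      linarith
    have := Real.sqrt_lt_sqrt (Complex.normSq_nonneg _) hsq
    simpa [Complex.norm_def] using this
  -- derivative of G at c
  have hHder : HasDerivAt H (-(deriv f c / f c)) c := (hg c hcmem).const_sub _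
  have hGder : HasDerivAt G (-(deriv f c / f c) / (a + (starRingEnd ℂ) a)) c := by
    have hdc : H c + (starRingEnd ℂ) a ≠ 0 := hden c hcmem
    have := (hHder.sub_const a).div (hHder.add_const ((starRingEnd ℂ) a)) hdc
    refine this.congr_deriv ?_
    rw [← ha]
    have hane : a + (starRingEnd ℂ) a ≠ 0 := by rw [ha] at hdc ⊢; exact hdc
    field_simp
    ring
  -- Schwarz lemma
  have hSch := Complex.norm_deriv_le_div_of_mapsTo_ball hGdiff (hmaps.mono_right ball_subset_closedBall) hρ
  rw [hGder.deriv] at hSch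
  have haa : ‖a + (starRingEnd ℂ) a‖ = 2 * a.re := by
    rw [Complex.add_conj]
    rw [show ((2 * a.re : ℝ) : ℂ) = ((2 * a.re : ℝ) : ℂ) from rfl]
    rw [Complex.norm_real, Real.norm_eq_abs, abs_of_pos (by linarith)]
  rw [norm_div, norm_neg, norm_div, haa] at hSch
  -- combine
  rw [div_le_div_iff₀ (by positivity) hρ] at hSch
  rw [← ha_re]
  calc ‖deriv f c‖ * ρ
      = (‖deriv f c‖ / ‖f c‖ * ρ) * ‖f c‖ := by
        field_simp
    _ ≤ (2 * a.re) * ‖f c‖ := by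
        have h1 : ‖deriv f c‖ / ‖f c‖ * ρ ≤ 2 * a.re := by
          simpa using hSch
        exact mul_le_mul_of_nonneg_right h1 hfc_pos.le
    _ = 2 * (‖f c‖ * a.re) := by ring

theorem modulus_condition_implies_bloch_type (ω : ℝ → ℝ) (f : ℂ → ℂ) (C₀ C₃ : ℝ)
    (hf : DifferentiableOn ℂ f (ball (0 : ℂ) 1))
    (hpos : ∀ t ∈ Ioc (0 : ℝ) 1, 0 < ω t) (hC₀ : 0 < C₀)
    (hmod : ∀ a ∈ Ioc (0 : ℝ) 1, ∀ b ∈ Ioc (0 : ℝ) 1,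
      1 / 2 ≤ a / b → a / b ≤ 2 → 1 / C₀ ≤ ω a / ω b ∧ ω a / ω b ≤ C₀)
    (hC₃ : 0 < C₃)
    (hzero : ∀ z ∈ ball (0 : ℂ) 1, (∃ w ∈ ball z ((1 - ‖z‖) / 2), f w = 0) →
      sSup ((fun w => ‖f w‖) '' ball z ((1 - ‖z‖) / 2)) ≤
        C₃ * ω (1 - ‖z‖))
    (hnozero : ∀ z ∈ ball (0 : ℂ) 1, (∀ w ∈ ball z ((1 - ‖z‖) / 2), f w ≠ 0) →
      ‖f z‖ *
        Real.log (sSup ((fun w => ‖f w‖) '' ball z ((1 - ‖z‖) / 2))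
          / ‖f z‖) ≤ C₃ * ω (1 - ‖z‖)) :
    ∃ C > 0, ∀ z ∈ ball (0 : ℂ) 1,
      ‖deriv f z‖ ≤ C * ω (1 - ‖z‖) / (1 - ‖z‖) := by
  refine ⟨8 * C₃, by positivity, fun z hz => ?_⟩
  set d : ℝ := 1 - ‖z‖ with hd_def
  have hzlt : ‖z‖ < 1 := by simpa using mem_ball_zero_iff.mp hz
  have hd : 0 < d := by simp [hd_def]; linarith
  have hsub : ball z (d / 2) ⊆ ball (0 : ℂ) 1 := by
    intro w hw
    rw [mem_ball_zero_iff]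
    have h1 : ‖w - z‖ < d / 2 := by
      have := mem_ball.mp hw; rwa [dist_eq_norm] at this
    calc ‖w‖ = ‖z + (w - z)‖ := by ring_nf
      _ ≤ ‖z‖ + ‖w - z‖ := norm_add_le _ _
      _ < ‖z‖ + d / 2 := by linarith
      _ ≤ 1 := by simp [hd_def]; linarith
  have hsub' : closedBall z (d / 2) ⊆ ball (0 : ℂ) 1 := by
    intro w hw
    rw [mem_ball_zero_iff]
    have h1 : ‖w - z‖ ≤ d / 2 := by
      have := mem_closedBall.mp hw; rwa [dist_eq_norm] at this
    calc ‖w‖ = ‖z + (w - z)‖ := by ring_nf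
      _ ≤ ‖z‖ + ‖w - z‖ := norm_add_le _ _
      _ ≤ ‖z‖ + d / 2 := by linarith
      _ < 1 := by simp [hd_def]; linarith
  set M : ℝ := sSup ((fun w => ‖f w‖) '' ball z (d / 2)) with hM_def
  have hbdd : BddAbove ((fun w => ‖f w‖) '' ball z (d / 2)) := by
    have hK : IsCompact (closedBall z (d / 2)) := isCompact_closedBall _ _
    have hcont : ContinuousOn (fun w => ‖f w‖) (closedBall z (d / 2)) :=
      continuous_norm.comp_continuousOn (hf.continuousOn.mono hsub')
    have := (hK.image_of_continuousOn hcont).bddAbove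
    exact this.mono (image_mono ball_subset_closedBall)
  have hqsub : ball z (d / 4) ⊆ ball z (d / 2) := ball_subset_ball (by linarith)
  have hfM : ∀ w ∈ ball z (d / 2), ‖f w‖ ≤ M :=
    fun w hw => le_csSup hbdd ⟨w, hw, rfl⟩
  have hzB : z ∈ ball z (d / 2) := mem_ball_self (by positivity)
  have hMfz : ‖f z‖ ≤ M := hfM z hzB
  have hM0 : 0 ≤ M := (norm_nonneg _).trans hMfz
  by_cases hex : ∃ w ∈ ball z (d / 2), f w = 0
  · -- f has a zero in B_z : Schwarz lemma on the quarter ball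
    have hMω : M ≤ C₃ * ω d := hzero z hz hex
    have key : ∀ ε > 0, ‖deriv f z‖ ≤ (2 * M + ε) / (d / 4) := by
      intro ε hε
      refine Complex.norm_deriv_le_div_of_mapsTo_ball
        (hf.mono (subset_trans hqsub hsub)) (MapsTo.mono_right ?_ ball_subset_closedBall) (by positivity)
      intro w hw
      rw [mem_ball]
      calc dist (f w) (f z) ≤ ‖f w‖ + ‖f z‖ := by
            rw [dist_eq_norm]
            exact (norm_sub_le _ _)
        _ ≤ M + M := add_le_add (hfM w (hqsub hw)) hMfz
        _ < 2 * M + ε := by linarith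
    have hle : ‖deriv f z‖ ≤ 2 * M / (d / 4) := by
      refine le_of_forall_pos_le_add fun ε hε => ?_
      have h1 := key (ε * (d / 4)) (by positivity)
      have h2 : (2 * M + ε * (d / 4)) / (d / 4) = 2 * M / (d / 4) + ε := by
        field_simp
      rw [h2] at h1
      linarith
    calc ‖deriv f z‖ ≤ 2 * M / (d / 4) := hle
      _ = 8 * M / d := by field_simp; ring
      _ ≤ 8 * (C₃ * ω d) / d := by gcongr
      _ = 8 * C₃ * ω d / d := by ring
  · -- f has no zero in B_z
    push_neg at hex
    have hbc : ‖f z‖ * Real.log (M / ‖f z‖) ≤ C₃ * ω d :=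
      hnozero z hz hex
    have hfz : f z ≠ 0 := hex z hzB
    have hfz_pos : 0 < ‖f z‖ := norm_pos_iff.mpr hfz
    have key : ∀ ε > 0, ‖deriv f z‖ * (d / 4) ≤
        2 * (‖f z‖ * Real.log ((M + ε) / ‖f z‖)) := by
      intro ε hε
      refine deriv_bound_aux (by positivity) (by linarith : d / 4 < d / 2)
        (hf.mono hsub) hex (fun w hw => ?_)
      have := hfM w (hqsub hw)
      linarith
    have hlim : Filter.Tendsto
        (fun ε : ℝ => 2 * (‖f z‖ * Real.log ((M + ε) / ‖f z‖)))
        (nhdsWithin 0 (Ioi 0))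
        (nhds (2 * (‖f z‖ * Real.log (M / ‖f z‖)))) := by
      apply Filter.Tendsto.mono_left _ nhdsWithin_le_nhds
      have hMpos : 0 < M := hfz_pos.trans_le hMfz
      have h1 : Filter.Tendsto (fun ε : ℝ => (M + ε) / ‖f z‖) (nhds 0)
          (nhds (M / ‖f z‖)) := by
        have ht : Filter.Tendsto (fun ε : ℝ => (M + ε)) (nhds 0) (nhds (M + 0)) :=
          (continuous_const.add continuous_id).tendsto 0
        simpa using ht.div_const (‖f z‖)
      have h2 : Filter.Tendsto (fun ε : ℝ => Real.log ((M + ε) / ‖f z‖))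
          (nhds 0) (nhds (Real.log (M / ‖f z‖))) := by
        refine (Real.continuousAt_log ?_).tendsto.comp h1
        exact (div_pos hMpos hfz_pos).ne'
      exact (h2.const_mul (‖f z‖)).const_mul 2
    have hmain : ‖deriv f z‖ * (d / 4) ≤
        2 * (‖f z‖ * Real.log (M / ‖f z‖)) := by
      refine ge_of_tendsto hlim ?_
      filter_upwards [self_mem_nhdsWithin] with ε hε
      exact key ε hε
    have hfinal : ‖deriv f z‖ * (d / 4) ≤ 2 * (C₃ * ω d) := by
      calc ‖deriv f z‖ * (d / 4)
          ≤ 2 * (‖f z‖ * Real.log (M / ‖f z‖)) := hmain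
        _ ≤ 2 * (C₃ * ω d) := by linarith
    calc ‖deriv f z‖ = (‖deriv f z‖ * (d / 4)) * (4 / d) := by
          field_simp
      _ ≤ (2 * (C₃ * ω d)) * (4 / d) := by
          have h4 : (0:ℝ) < 4 / d := by positivity
          exact mul_le_mul_of_nonneg_right hfinal h4.le
      _ = 8 * C₃ * ω d / d := by field_simp; ring
end

section
/- Let ω : (0,1] → (0,∞) be moderate and f holomorphic on the open unit disk D. Then f satisfies |f'(z)| ≤ C ω(d_z)/d_z on D for some constant C > 0 if and only if there exists C₁ > 0 such that |f(z₁)| - |f(z₂)| ≤ C₁ ω(d_z) for every z ∈ D and all z₁, z₂ ∈ B_z. -/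
open Set Metric
open intervalIntegral Real Complex

noncomputable section

private def ee (θ : ℝ) : ℂ := Complex.exp (θ * Complex.I)

private lemma ee_ne (θ : ℝ) : ee θ ≠ 0 := Complex.exp_ne_zero _

private lemma abs_ee (θ : ℝ) : ‖ee θ‖ = 1 := by
  simp [ee, Complex.norm_exp]

private lemma circleMap_eq (z : ℂ) (r : ℝ) (θ : ℝ) : circleMap z r θ = z + r * ee θ := rfl

private lemma cont_g {f : ℂ → ℂ} {z : ℂ} {r : ℝ} (hr : 0 < r)
    (hf : DifferentiableOn ℂ f (closedBall z r)) :
    Continuous (fun θ : ℝ => f (circleMap z r θ)) :=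
  hf.continuousOn.comp_continuous (continuous_circleMap z r)
    (fun θ => circleMap_mem_closedBall z hr.le θ)

private lemma cont_ee : Continuous ee :=
  Complex.continuous_exp.comp (Complex.continuous_ofReal.mul continuous_const)

private lemma cont_ee_inv : Continuous (fun θ => (ee θ)⁻¹) :=
  cont_ee.inv₀ ee_ne

-- (C)
private lemma intC {f : ℂ → ℂ} {z : ℂ} {r : ℝ} (hr : 0 < r)
    (hf : DifferentiableOn ℂ f (closedBall z r)) :
    (∫ θ in (0:ℝ)..2*π, f (circleMap z r θ)) = 2 * π * f z := by
  have h := hf.circleIntegral_sub_inv_smul (mem_ball_self hr)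
  rw [circleIntegral] at h
  have heq : ∀ θ ∈ uIcc (0:ℝ) (2*π),
      deriv (circleMap z r) θ • (circleMap z r θ - z)⁻¹ • f (circleMap z r θ)
        = Complex.I * f (circleMap z r θ) := by
    intro θ _
    rw [deriv_circleMap, circleMap_sub_center]
    have h1 : circleMap 0 r θ ≠ 0 := circleMap_ne_center hr.ne'
    field_simp
    simp only [smul_eq_mul]
    field_simp
  rw [intervalIntegral.integral_congr heq, intervalIntegral.integral_const_mul] at h
  have hI : (Complex.I : ℂ) ≠ 0 := Complex.I_ne_zero
  rw [smul_eq_mul] at h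
  apply mul_left_cancel₀ hI
  rw [h]; ring


-- (B)
private lemma intB {f : ℂ → ℂ} {z : ℂ} {r : ℝ} (hr : 0 < r)
    (hf : DifferentiableOn ℂ f (closedBall z r)) :
    (∫ θ in (0:ℝ)..2*π, ee θ * f (circleMap z r θ)) = 0 := by
  have h0 : (∮ w in C(z, r), f w) = 0 := by
    apply circleIntegral_eq_zero_of_differentiable_on_off_countable hr.le countable_empty
      hf.continuousOn
    intro w hw
    exact (hf w (ball_subset_closedBall hw.1)).differentiableAt
      (closedBall_mem_nhds_of_mem hw.1)
  rw [circleIntegral] at h0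
  have heq : ∀ θ ∈ uIcc (0:ℝ) (2*π),
      deriv (circleMap z r) θ • f (circleMap z r θ)
        = ((r : ℂ) * Complex.I) * (ee θ * f (circleMap z r θ)) := by
    intro θ _
    rw [deriv_circleMap]
    show (circleMap 0 r θ * Complex.I) * _ = _
    rw [circleMap_eq]
    push_cast
    ring
  rw [intervalIntegral.integral_congr heq, intervalIntegral.integral_const_mul] at h0
  have hne : ((r : ℂ) * Complex.I) ≠ 0 := by
    simp [Complex.I_ne_zero, Complex.ofReal_ne_zero, hr.ne']
  exact (mul_eq_zero.mp h0).resolve_left hne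

-- (A)
private lemma intA {f : ℂ → ℂ} {z : ℂ} {r : ℝ} (hr : 0 < r)
    (hf : DifferentiableOn ℂ f (closedBall z r)) :
    (∫ θ in (0:ℝ)..2*π, (ee θ)⁻¹ * f (circleMap z r θ)) = 2 * π * r * deriv f z := by
  set R : NNReal := ⟨r, hr.le⟩ with hR
  have hf' : DifferentiableOn ℂ f (closedBall z (R : ℝ)) := hf
  have hp := hf'.hasFPowerSeriesOnBall (by exact_mod_cast hr)
  have hd : deriv f z = cauchyPowerSeries f z r 1 (fun _ => 1) :=
    hp.hasFPowerSeriesAt.deriv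
  rw [cauchyPowerSeries_apply] at hd
  rw [circleIntegral] at hd
  have heq : ∀ θ ∈ uIcc (0:ℝ) (2*π),
      deriv (circleMap z r) θ • ((1 / (circleMap z r θ - z)) ^ 1 •
        (circleMap z r θ - z)⁻¹ • f (circleMap z r θ))
        = (Complex.I * (r : ℂ)⁻¹) * ((ee θ)⁻¹ * f (circleMap z r θ)) := by
    intro θ _
    rw [deriv_circleMap, circleMap_sub_center]
    have h1 : circleMap 0 r θ = (r : ℂ) * ee θ := by rw [circleMap_eq]; ring
    rw [h1]
    have hre : (r : ℂ) ≠ 0 := by exact_mod_cast hr.ne'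
    have hee := ee_ne θ
    field_simp
    simp only [smul_eq_mul]
    field_simp
  rw [intervalIntegral.integral_congr heq, intervalIntegral.integral_const_mul] at hd
  rw [smul_eq_mul] at hd
  have hre : (r : ℂ) ≠ 0 := by exact_mod_cast hr.ne'
  have hπ : (π : ℂ) ≠ 0 := by exact_mod_cast Real.pi_ne_zero
  rw [hd]
  field_simp

private lemma int_conj {h : ℝ → ℂ} (hc : Continuous h) (a b : ℝ) :
    (∫ θ in a..b, (starRingEnd ℂ) (h θ)) = (starRingEnd ℂ) (∫ θ in a..b, h θ) := by
  have := (Complex.conjCLE.toContinuousLinearMap).intervalIntegral_comp_comm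
    (μ := MeasureTheory.volume) (a := a) (b := b) (hc.intervalIntegrable a b)
  simpa using this

private lemma int_re {h : ℝ → ℂ} (hc : Continuous h) (a b : ℝ) :
    (∫ θ in a..b, (h θ).re) = (∫ θ in a..b, h θ).re := by
  have := (Complex.reCLM).intervalIntegral_comp_comm
    (μ := MeasureTheory.volume) (a := a) (b := b) (hc.intervalIntegrable a b)
  simpa using this

private lemma ee_inv_eq_conj (θ : ℝ) : (ee θ)⁻¹ = (starRingEnd ℂ) (ee θ) := by
  rw [Complex.inv_def]
  rw [show Complex.normSq (ee θ) = 1 by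
    have := abs_ee θ
    rw [← Complex.sq_norm, this]; norm_num]
  simp

-- (D)
private lemma intD : (∫ θ in (0:ℝ)..2*π, (ee θ)⁻¹) = 0 := by
  have h1 : (∫ θ in (0:ℝ)..2*π, ee θ * (fun _ : ℂ => (1:ℂ)) (circleMap 0 1 θ)) = 0 :=
    intB (z := 0) one_pos (differentiableOn_const 1)
  simp only [mul_one] at h1
  calc (∫ θ in (0:ℝ)..2*π, (ee θ)⁻¹)
      = ∫ θ in (0:ℝ)..2*π, (starRingEnd ℂ) (ee θ) := by
        exact intervalIntegral.integral_congr fun θ _ => ee_inv_eq_conj θ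
    _ = (starRingEnd ℂ) (∫ θ in (0:ℝ)..2*π, ee θ) := int_conj cont_ee _ _
    _ = 0 := by rw [h1]; simp

private lemma key {f : ℂ → ℂ} {z : ℂ} {r K : ℝ} (hr : 0 < r)
    (hf : DifferentiableOn ℂ f (closedBall z r))
    (hb : ∀ θ : ℝ, ‖f (circleMap z r θ)‖ ≤ ‖f z‖ + K) :
    ‖deriv f z‖ ≤ 2 * K / r := by
  have hg : Continuous (fun θ : ℝ => f (circleMap z r θ)) := cont_g hr hf
  set g := fun θ : ℝ => f (circleMap z r θ) with hgdef
  set A : ℝ := ‖f z‖ with hA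
  set l : ℂ := if f z = 0 then 1 else (A : ℂ) / f z with hldef
  have hl1 : ‖l‖ = 1 := by
    rw [hldef]
    split_ifs with h
    · simp
    · have hz : ‖f z‖ ≠ 0 := by simpa using h
      rw [norm_div, Complex.norm_real, Real.norm_eq_abs, hA, _root_.abs_of_nonneg (norm_nonneg (f z)),
        div_self hz]
  have hlf : l * f z = (A : ℂ) := by
    rw [hldef]
    split_ifs with h
    · simp [h, hA]
    · field_simp
  set u : ℝ → ℝ := fun θ => A + K - (l * g θ).re with hu
  have hu0 : ∀ θ, 0 ≤ u θ := by
    intro θ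
    have h1 : (l * g θ).re ≤ ‖l * g θ‖ := Complex.re_le_norm _
    have h2 : ‖l * g θ‖ = ‖g θ‖ := by
      rw [norm_mul, hl1, one_mul]
    have := hb θ
    simp only [hu]
    have := (h1.trans (le_of_eq h2)).trans this
    linarith
  -- pointwise identity for the integrand
  have hpt : ∀ θ ∈ uIcc (0:ℝ) (2*π), ((u θ : ℝ) : ℂ) * (ee θ)⁻¹ =
      ((A + K : ℝ) : ℂ) * (ee θ)⁻¹ - (l/2) * ((ee θ)⁻¹ * g θ)
        - ((starRingEnd ℂ) l / 2) * ((starRingEnd ℂ) (ee θ * g θ)) := by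
    intro θ _
    have hre : ((((l * g θ).re : ℝ)) : ℂ) = (l * g θ + (starRingEnd ℂ) (l * g θ)) / 2 := by
      rw [Complex.add_conj]; push_cast; ring
    simp only [hu]
    push_cast
    rw [hre, ee_inv_eq_conj θ]
    rw [map_mul, map_mul]
    ring
  -- continuity of pieces
  have c1 : Continuous fun θ : ℝ => ((A + K : ℝ) : ℂ) * (ee θ)⁻¹ :=
    continuous_const.mul cont_ee_inv
  have c2 : Continuous fun θ : ℝ => (l/2) * ((ee θ)⁻¹ * g θ) :=
    continuous_const.mul (cont_ee_inv.mul hg)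
  have c3 : Continuous fun θ : ℝ => ((starRingEnd ℂ) l / 2) * ((starRingEnd ℂ) (ee θ * g θ)) :=
    continuous_const.mul (Complex.continuous_conj.comp (cont_ee.mul hg))
  have E : (∫ θ in (0:ℝ)..2*π, ((u θ : ℝ) : ℂ) * (ee θ)⁻¹)
      = -(π * r * l * deriv f z) := by
    rw [intervalIntegral.integral_congr hpt]
    rw [intervalIntegral.integral_sub (f := fun θ => ((A + K : ℝ) : ℂ) * (ee θ)⁻¹ - (l/2) * ((ee θ)⁻¹ * g θ)) (((c1.sub c2)).intervalIntegrable _ _)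
      (c3.intervalIntegrable _ _),
      intervalIntegral.integral_sub (c1.intervalIntegrable _ _) (c2.intervalIntegrable _ _)]
    rw [intervalIntegral.integral_const_mul, intervalIntegral.integral_const_mul,
      intervalIntegral.integral_const_mul]
    rw [intD, int_conj (h := fun θ => ee θ * g θ) (cont_ee.mul hg), intB hr hf, intA hr hf]
    simp
    ring
  have hnorm : ∀ θ ∈ uIcc (0:ℝ) (2*π), ‖((u θ : ℝ):ℂ) * (ee θ)⁻¹‖ = u θ := by
    intro θ _
    rw [norm_mul, Complex.norm_real, Real.norm_eq_abs, norm_inv, abs_ee]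
    rw [_root_.abs_of_nonneg (hu0 θ)]
    simp
  have hle : ‖∫ θ in (0:ℝ)..2*π, ((u θ : ℝ):ℂ) * (ee θ)⁻¹‖
      ≤ ∫ θ in (0:ℝ)..2*π, u θ := by
    refine le_trans (intervalIntegral.norm_integral_le_integral_norm
      (by positivity : (0:ℝ) ≤ 2*π)) ?_
    rw [intervalIntegral.integral_congr hnorm]
  have hIu : (∫ θ in (0:ℝ)..2*π, u θ) = 2 * π * K := by
    have hcre : Continuous fun θ : ℝ => (l * g θ).re :=
      Complex.continuous_re.comp (continuous_const.mul hg)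
    simp only [hu]
    rw [intervalIntegral.integral_sub (intervalIntegrable_const) (hcre.intervalIntegrable _ _)]
    rw [intervalIntegral.integral_const]
    rw [int_re (h := fun θ => l * g θ) (continuous_const.mul hg), intervalIntegral.integral_const_mul, intC hr hf]
    have : l * (2 * ↑π * f z) = 2 * (π : ℂ) * (A : ℂ) := by rw [show l * (2 * ↑π * f z) = 2 * ↑π * (l * f z) by ring, hlf]
    rw [this]
    have : (2 * (π:ℂ) * (A:ℂ)).re = 2 * π * A := by
      have : (2 * (π:ℂ) * (A:ℂ)) = ((2 * π * A : ℝ) : ℂ) := by push_cast; ring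
      rw [this, Complex.ofReal_re]
    rw [this]
    simp
    ring
  have habsE : ‖-(↑π * ↑r * l * deriv f z)‖ = π * r * ‖deriv f z‖ := by
    rw [norm_neg, norm_mul, norm_mul, norm_mul, hl1, Complex.norm_real, Complex.norm_real, Real.norm_eq_abs, Real.norm_eq_abs,
      _root_.abs_of_nonneg Real.pi_pos.le, _root_.abs_of_nonneg hr.le]
    ring
  rw [E, habsE, hIu] at hle
  rw [le_div_iff₀ hr]
  have hπ : (0:ℝ) < π := Real.pi_pos
  nlinarith [norm_nonneg (deriv f z)]

theorem bloch_type_iff_modulus_oscillation (ω : ℝ → ℝ) (f : ℂ → ℂ) (C₀ : ℝ)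
    (hf : DifferentiableOn ℂ f (ball (0 : ℂ) 1))
    (hpos : ∀ t ∈ Ioc (0 : ℝ) 1, 0 < ω t) (hC₀ : 0 < C₀)
    (hmod : ∀ a ∈ Ioc (0 : ℝ) 1, ∀ b ∈ Ioc (0 : ℝ) 1,
      1 / 2 ≤ a / b → a / b ≤ 2 → 1 / C₀ ≤ ω a / ω b ∧ ω a / ω b ≤ C₀) :
    (∃ C > 0, ∀ z ∈ ball (0 : ℂ) 1,
        ‖deriv f z‖ ≤ C * ω (1 - ‖z‖) / (1 - ‖z‖)) ↔
    (∃ C₁ > 0, ∀ z ∈ ball (0 : ℂ) 1,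
        ∀ z₁ ∈ ball z ((1 - ‖z‖) / 2), ∀ z₂ ∈ ball z ((1 - ‖z‖) / 2),
          ‖f z₁‖ - ‖f z₂‖ ≤ C₁ * ω (1 - ‖z‖)) := by
  constructor
  · rintro ⟨C, hC, hbd⟩
    refine ⟨2 * C * C₀, by positivity, ?_⟩
    intro z hz z₁ hz₁ z₂ hz₂
    set d : ℝ := 1 - ‖z‖ with hddef
    have hzabs : ‖z‖ < 1 := by
      simpa [Complex.dist_eq] using hz
    have hd : 0 < d := sub_pos.mpr hzabs
    have hd1 : d ≤ 1 := by
      have := norm_nonneg z; rw [hddef]; linarith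
    have hωd : 0 < ω d := hpos d ⟨hd, hd1⟩
    have hB1 : ball z (d / 2) ⊆ ball (0:ℂ) 1 := by
      intro w hw
      have h1 : dist w z < d / 2 := mem_ball.mp hw
      have : dist w 0 ≤ dist w z + dist z 0 := dist_triangle _ _ _
      have hz0 : dist z 0 = ‖z‖ := by simp [Complex.dist_eq]
      rw [mem_ball]
      rw [hz0] at this
      linarith
    set M : ℝ := 2 * C * C₀ * ω d / d with hM
    have hbound : ∀ w ∈ ball z (d / 2), ‖deriv f w‖ ≤ M := by
      intro w hw
      have hw1 : w ∈ ball (0:ℂ) 1 := hB1 hw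
      have hwabs : ‖w‖ < 1 := by simpa [Complex.dist_eq] using hw1
      have hdist : ‖w - z‖ < d / 2 := by
        simpa [Complex.dist_eq] using hw
      set dw : ℝ := 1 - ‖w‖ with hdw
      have hdw0 : 0 < dw := sub_pos.mpr hwabs
      have hdw1 : dw ≤ 1 := by have := norm_nonneg w; rw [hdw]; linarith
      have habs1 : ‖w‖ ≤ ‖z‖ + ‖w - z‖ := by
        simpa using norm_add_le z (w - z)
      have habs2 : ‖z‖ ≤ ‖w‖ + ‖w - z‖ := by
        have := norm_add_le w (z - w)
        have h2 : ‖z - w‖ = ‖w - z‖ := by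
          rw [← neg_sub, norm_neg]
        simp at this
        rw [h2] at this
        linarith
      have hlow : d / 2 ≤ dw := by simp [hdw, hddef] at *; linarith
      have hhigh : dw ≤ 2 * d := by simp [hdw, hddef] at *; linarith
      have hrat1 : 1 / 2 ≤ dw / d := by
        rw [le_div_iff₀ hd]; linarith
      have hrat2 : dw / d ≤ 2 := by
        rw [div_le_iff₀ hd]; linarith
      have hω := (hmod dw ⟨hdw0, hdw1⟩ d ⟨hd, hd1⟩ hrat1 hrat2).2
      have hωle : ω dw ≤ C₀ * ω d := by
        rw [div_le_iff₀ hωd] at hω; linarith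
      have h1 : ‖deriv f w‖ ≤ C * ω dw / dw := hbd w hw1
      have h2 : C * ω dw / dw ≤ C * (C₀ * ω d) / (d / 2) := by
        apply div_le_div₀ (by positivity)
        · nlinarith
        · linarith
        · exact hlow
      have h3 : C * (C₀ * ω d) / (d / 2) = M := by
        rw [hM]; field_simp
      linarith
    have hdiff : ∀ w ∈ ball z (d / 2), DifferentiableAt ℂ f w := fun w hw =>
      hf.differentiableAt (isOpen_ball.mem_nhds (hB1 hw))
    have hlip := (convex_ball z (d / 2)).norm_image_sub_le_of_norm_deriv_le hdiff hbound hz₂ hz₁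
    have hM0 : 0 ≤ M := by positivity
    have hz12 : ‖z₁ - z₂‖ ≤ d := by
      have h1 : dist z₁ z < d / 2 := mem_ball.mp hz₁
      have h2 : dist z₂ z < d / 2 := mem_ball.mp hz₂
      have := dist_triangle z₁ z z₂
      have h3 : dist z₁ z₂ = ‖z₁ - z₂‖ := by rw [dist_eq_norm]
      rw [dist_comm z z₂] at this
      linarith
    have h4 : ‖f z₁ - f z₂‖ ≤ M * d :=
      hlip.trans (by exact mul_le_mul_of_nonneg_left hz12 hM0)
    have h5 : M * d = 2 * C * C₀ * ω d := by
      rw [hM]; field_simp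
    have h6 : ‖f z₁‖ - ‖f z₂‖ ≤ ‖f z₁ - f z₂‖ := by
      simpa using norm_sub_norm_le (f z₁) (f z₂)
    linarith [h4, h5 ▸ h4]
  · rintro ⟨C₁, hC₁, hosc⟩
    refine ⟨8 * C₁, by positivity, ?_⟩
    intro z hz
    set d : ℝ := 1 - ‖z‖ with hddef
    have hzabs : ‖z‖ < 1 := by simpa [Complex.dist_eq] using hz
    have hd : 0 < d := sub_pos.mpr hzabs
    have hr : 0 < d / 4 := by linarith
    have hsub : closedBall z (d / 4) ⊆ ball (0:ℂ) 1 := by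
      intro w hw
      have h1 : dist w z ≤ d / 4 := mem_closedBall.mp hw
      have := dist_triangle w z 0
      have hz0 : dist z 0 = ‖z‖ := by simp [Complex.dist_eq]
      rw [mem_ball]
      rw [hz0] at this
      linarith
    have hfr : DifferentiableOn ℂ f (closedBall z (d / 4)) := hf.mono hsub
    have hb : ∀ θ : ℝ, ‖f (circleMap z (d / 4) θ)‖
        ≤ ‖f z‖ + C₁ * ω d := by
      intro θ
      have hmem : circleMap z (d / 4) θ ∈ ball z (d / 2) := by
        have := circleMap_mem_sphere z hr.le θ
        rw [mem_sphere] at this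
        rw [mem_ball, this]
        linarith
      have := hosc z hz (circleMap z (d / 4) θ) hmem z (mem_ball_self (by linarith))
      linarith
    have hkey := key hr hfr hb
    have heq : 2 * (C₁ * ω d) / (d / 4) = 8 * C₁ * ω d / d := by
      field_simp; ring
    rw [heq] at hkey
    exact hkey
end
end

section
/- Let f be holomorphic and nowhere vanishing on the open unit disk D, and let ω : (0,1] → (0,∞) be moderate. Then there exists C > 0 with |f'(z)| ≤ C ω(d_z)/d_z for all z ∈ D if and only if there exists C' > 0 such that |f(z)| log(M_f(z)/|f(z)|) ≤ C' ω(d_z) for all z ∈ D. -/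
open Set Metric

/-- Existence of a holomorphic logarithm of a nonvanishing holomorphic function on a ball. -/
lemma exists_holo_log {f : ℂ → ℂ} {c : ℂ} {R : ℝ} (hR : 0 < R)
    (hf : DifferentiableOn ℂ f (ball c R))
    (hnz : ∀ w ∈ ball c R, f w ≠ 0) :
    ∃ g : ℂ → ℂ, (∀ w ∈ ball c R, DifferentiableAt ℂ g w) ∧
      ∀ w ∈ ball c R, Complex.exp (g w) = f w := by
  have hof : IsOpen (ball c R) := isOpen_ball
  have hcmem : c ∈ ball c R := mem_ball_self hR
  have han : AnalyticOnNhd ℂ f (ball c R) := hf.analyticOnNhd hof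
  have hderiv : DifferentiableOn ℂ (deriv f) (ball c R) := han.deriv.differentiableOn
  set h : ℂ → ℂ := fun w => deriv f w / f w with hh
  have hcont : ContinuousOn h (ball c R) := (hderiv.continuousOn).div hf.continuousOn hnz
  set g : ℂ → ℂ := fun w =>
    Complex.log (f c) + ∫ s in (0:ℝ)..1, (w - c) * h (c + (s : ℂ) * (w - c)) with hg
  -- pointwise identity
  have key : ∀ w ∈ ball c R, Complex.exp (g w) = f w := by
    intro w hw
    set γ : ℝ → ℂ := fun t => c + (t : ℂ) * (w - c) with hγdef
    have hγcont : Continuous γ := by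
      exact continuous_const.add (Complex.continuous_ofReal.mul continuous_const)
    set T : Set ℝ := γ ⁻¹' (ball c R) with hT
    have hTopen : IsOpen T := hof.preimage hγcont
    have hγmem : ∀ t ∈ Icc (0:ℝ) 1, t ∈ T := by
      intro t ht
      simp only [hT, Set.mem_preimage, mem_ball, dist_eq_norm, hγdef]
      have he : c + (t:ℂ) * (w - c) - c = (t:ℂ) * (w - c) := by ring
      rw [he, norm_mul]
      have h1 : ‖(t:ℂ)‖ ≤ 1 := by
        rw [Complex.norm_real, Real.norm_eq_abs, abs_of_nonneg ht.1]; exact ht.2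
      have h2 : ‖w - c‖ < R := by simpa [mem_ball, dist_eq_norm] using hw
      calc ‖(t:ℂ)‖ * ‖w - c‖ ≤ 1 * ‖w - c‖ :=
            mul_le_mul_of_nonneg_right h1 (norm_nonneg _)
        _ < R := by simpa using h2
    set ψ : ℝ → ℂ := fun s => (w - c) * h (γ s) with hψdef
    have hψT : ∀ t ∈ T, ContinuousAt ψ t := by
      intro t ht
      exact continuousAt_const.mul ((hcont.continuousAt (hof.mem_nhds ht)).comp
        hγcont.continuousAt)
    have hψOn : ContinuousOn ψ T := fun t ht => (hψT t ht).continuousWithinAt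
    have hℓd : ∀ t ∈ Icc (0:ℝ) 1, HasDerivAt (fun u => ∫ s in (0:ℝ)..u, ψ s) (ψ t) t := by
      intro t ht
      refine intervalIntegral.integral_hasDerivAt_right ?_ ?_ (hψT t (hγmem t ht))
      · apply ContinuousOn.intervalIntegrable
        intro s hs
        rw [uIcc_of_le ht.1] at hs
        exact (hψT s (hγmem s ⟨hs.1, hs.2.trans ht.2⟩)).continuousWithinAt
      · exact hψOn.stronglyMeasurableAtFilter hTopen t (hγmem t ht)
    set F : ℝ → ℂ :=
      fun t => f (γ t) * Complex.exp (-(Complex.log (f c) + ∫ s in (0:ℝ)..t, ψ s)) with hF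
    have hFd : ∀ t ∈ Icc (0:ℝ) 1, HasDerivAt F 0 t := by
      intro t ht
      have hγball : γ t ∈ ball c R := hγmem t ht
      have hγd : HasDerivAt γ (w - c) t := by
        have h0 : HasDerivAt (fun u : ℂ => c + u * (w - c)) (w - c) ((t : ℝ) : ℂ) := by
          simpa using ((hasDerivAt_id ((t:ℝ):ℂ)).mul_const (w - c)).const_add c
        exact h0.comp_ofReal
      have hfd : HasDerivAt f (deriv f (γ t)) (γ t) :=
        (hf.differentiableAt (hof.mem_nhds hγball)).hasDerivAt
      have h1 : HasDerivAt (fun t => f (γ t)) ((w - c) • deriv f (γ t)) t :=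
        hfd.scomp t hγd
      have h2 : HasDerivAt (fun u => ∫ s in (0:ℝ)..u, ψ s) (ψ t) t := hℓd t ht
      have h3 : HasDerivAt
          (fun u => Complex.exp (-(Complex.log (f c) + ∫ s in (0:ℝ)..u, ψ s)))
          (Complex.exp (-(Complex.log (f c) + ∫ s in (0:ℝ)..t, ψ s)) * (-ψ t)) t := by
        exact ((h2.const_add (Complex.log (f c))).neg).cexp
      have h4 := h1.mul h3
      have hfγ : f (γ t) ≠ 0 := hnz _ hγball
      refine h4.congr_deriv ?_
      have hψt : ψ t = (w - c) * (deriv f (γ t) / f (γ t)) := rfl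
      rw [hψt]
      field_simp
      ring
    have hFc : ContinuousOn F (Icc 0 1) :=
      fun t ht => ((hFd t ht).continuousAt).continuousWithinAt
    have hconst := constant_of_has_deriv_right_zero hFc
      (fun t ht => (hFd t (Ico_subset_Icc_self ht)).hasDerivWithinAt) 1
      (right_mem_Icc.mpr zero_le_one)
    have hγ0 : γ 0 = c := by simp [hγdef]
    have hγ1 : γ 1 = w := by simp [hγdef]
    have hF0 : F 0 = 1 := by
      simp only [hF, hγ0, intervalIntegral.integral_same, add_zero,
        Complex.exp_neg, Complex.exp_log (hnz c hcmem)]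
      field_simp [hnz c hcmem]
    have hF1 : F 1 = f w * Complex.exp (-(g w)) := by
      simp only [hF, hg, hψdef, hγdef]
      norm_num
    rw [hconst, hF0] at hF1
    have hexpne : Complex.exp (-(g w)) ≠ 0 := Complex.exp_ne_zero _
    have := hF1.symm
    rw [Complex.exp_neg] at this
    field_simp at this
    rw [this]
  -- continuity of g on the ball
  have hgc : ContinuousOn g (ball c R) := by
    rw [continuousOn_iff_continuous_restrict]
    set Φ : ↥(ball c R) → ℝ → ℂ := fun w s =>
      ((w : ℂ) - c) * h (c + ((min 1 (max 0 s) : ℝ) : ℂ) * ((w : ℂ) - c)) with hΦdef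
    have hproj : Continuous fun s : ℝ => min 1 (max 0 s) :=
      continuous_const.min (continuous_const.max continuous_id)
    have hmapc : Continuous fun p : ↥(ball c R) × ℝ =>
        c + ((min 1 (max 0 p.2) : ℝ) : ℂ) * ((p.1 : ℂ) - c) := by
      apply continuous_const.add
      exact (Complex.continuous_ofReal.comp (hproj.comp continuous_snd)).mul
        ((continuous_subtype_val.comp continuous_fst).sub continuous_const)
    have hmapsTo : ∀ p : ↥(ball c R) × ℝ,
        c + ((min 1 (max 0 p.2) : ℝ) : ℂ) * ((p.1 : ℂ) - c) ∈ ball c R := by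
      rintro ⟨w, s⟩
      simp only [mem_ball, dist_eq_norm]
      have he : c + ((min 1 (max 0 s) : ℝ) : ℂ) * ((w : ℂ) - c) - c
          = ((min 1 (max 0 s) : ℝ) : ℂ) * ((w : ℂ) - c) := by ring
      rw [he, norm_mul]
      have h1 : ‖((min 1 (max 0 s) : ℝ) : ℂ)‖ ≤ 1 := by
        rw [Complex.norm_real, Real.norm_eq_abs, abs_of_nonneg (le_min zero_le_one (le_max_left 0 s))]
        exact min_le_left _ _
      have h2 : ‖(w : ℂ) - c‖ < R := by
        rw [← dist_eq_norm]; exact mem_ball.mp w.2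
      calc ‖((min 1 (max 0 s) : ℝ) : ℂ)‖ * ‖(w:ℂ) - c‖ ≤ 1 * ‖(w:ℂ) - c‖ :=
            mul_le_mul_of_nonneg_right h1 (norm_nonneg _)
        _ < R := by simpa using h2
    have hΦc : Continuous (Function.uncurry Φ) := by
      apply Continuous.mul
      · exact (continuous_subtype_val.comp continuous_fst).sub continuous_const
      · exact hcont.comp_continuous hmapc hmapsTo
    have hint := intervalIntegral.continuous_parametric_intervalIntegral_of_continuous'
      (μ := MeasureTheory.volume) hΦc 0 1
    have heq : (ball c R).domRestrict g
        = fun w => Complex.log (f c) + ∫ s in (0:ℝ)..1, Φ w s := by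
      funext w
      simp only [Set.domRestrict_apply, hg]
      congr 1
      apply intervalIntegral.integral_congr
      intro s hs
      rw [uIcc_of_le zero_le_one] at hs
      have : min 1 (max 0 s) = s := by
        rw [max_eq_right hs.1, min_eq_right hs.2]
      simp only [hΦdef, this]
    rw [heq]
    exact continuous_const.add hint
  -- differentiability
  refine ⟨g, ?_, key⟩
  intro w₀ hw₀
  have hfw₀ : f w₀ ≠ 0 := hnz w₀ hw₀
  set L : ℂ → ℂ := fun u => Complex.log (u / f w₀) + g w₀ with hL
  have hLw₀ : L (f w₀) = g w₀ := by
    simp [hL, div_self hfw₀]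
  have hLexp : ∀ u : ℂ, ‖u - f w₀‖ < ‖f w₀‖ → Complex.exp (L u) = u := by
    intro u hu
    have hune : u ≠ 0 := by
      intro h; rw [h] at hu; simp at hu
    rw [hL]
    simp only []
    rw [Complex.exp_add, Complex.exp_log (div_ne_zero hune hfw₀), key w₀ hw₀]
    field_simp
  have hsl : f w₀ / f w₀ ∈ Complex.slitPlane := by
    rw [div_self hfw₀]; exact Complex.one_mem_slitPlane
  have hLdiff : DifferentiableAt ℂ (fun w => L (f w)) w₀ := by
    have hdf : DifferentiableAt ℂ f w₀ := hf.differentiableAt (hof.mem_nhds hw₀)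
    have h1 : DifferentiableAt ℂ (fun w => Complex.log (f w / f w₀)) w₀ :=
      (hdf.div_const (f w₀)).clog hsl
    exact h1.add_const _
  have hev : g =ᶠ[nhds w₀] fun w => L (f w) := by
    have hgc' : ContinuousAt g w₀ := hgc.continuousAt (hof.mem_nhds hw₀)
    have hfc' : ContinuousAt f w₀ := (hf.differentiableAt (hof.mem_nhds hw₀)).continuousAt
    have hLfc : ContinuousAt (fun w => L (f w)) w₀ := hLdiff.continuousAt
    have e1 : ∀ᶠ w in nhds w₀, w ∈ ball c R := hof.mem_nhds hw₀
    have e2 : ∀ᶠ w in nhds w₀, ‖f w - f w₀‖ < ‖f w₀‖ := by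
      have ht : ContinuousAt (fun w => ‖f w - f w₀‖) w₀ :=
        (hfc'.sub (continuousAt_const : ContinuousAt (fun _ => f w₀) w₀)).norm
      have ht' : Filter.Tendsto (fun w => ‖f w - f w₀‖) (nhds w₀) (nhds 0) := by
        simpa using ht.tendsto
      exact ht'.eventually_lt_const (norm_pos_iff.mpr hfw₀)
    have e3 : ∀ᶠ w in nhds w₀, ‖g w - g w₀‖ < Real.pi := by
      have ht : ContinuousAt (fun w => ‖g w - g w₀‖) w₀ :=
        (hgc'.sub (continuousAt_const : ContinuousAt (fun _ => g w₀) w₀)).norm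
      have ht' : Filter.Tendsto (fun w => ‖g w - g w₀‖) (nhds w₀) (nhds 0) := by
        simpa using ht.tendsto
      exact ht'.eventually_lt_const Real.pi_pos
    have e4 : ∀ᶠ w in nhds w₀, ‖L (f w) - g w₀‖ < Real.pi := by
      have ht : ContinuousAt (fun w => ‖L (f w) - g w₀‖) w₀ :=
        (hLfc.sub (continuousAt_const : ContinuousAt (fun _ : ℂ => g w₀) w₀)).norm
      have ht' : Filter.Tendsto (fun w => ‖L (f w) - g w₀‖) (nhds w₀) (nhds 0) := by
        have h0 : ‖L (f w₀) - g w₀‖ = 0 := by rw [hLw₀]; simp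
        simpa [h0] using ht.tendsto
      exact ht'.eventually_lt_const Real.pi_pos
    filter_upwards [e1, e2, e3, e4] with w h1 h2 h3 h4
    have hexp1 : Complex.exp (g w - L (f w)) = 1 := by
      rw [Complex.exp_sub, key w h1, hLexp (f w) h2, div_self (hnz w h1)]
    obtain ⟨n, hn⟩ := Complex.exp_eq_one_iff.mp hexp1
    have hnorm : ‖g w - L (f w)‖ < 2 * Real.pi := by
      have : g w - L (f w) = (g w - g w₀) + (g w₀ - L (f w)) := by ring
      rw [this]
      calc ‖(g w - g w₀) + (g w₀ - L (f w))‖ ≤ ‖g w - g w₀‖ + ‖g w₀ - L (f w)‖ := norm_add_le _ _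
        _ < Real.pi + Real.pi := by
            have h4' : ‖g w₀ - L (f w)‖ < Real.pi := by rwa [norm_sub_rev] at h4
            exact add_lt_add h3 h4'
        _ = 2 * Real.pi := by ring
    rw [hn] at hnorm
    have hnval : ‖(n : ℂ) * (2 * Real.pi * Complex.I)‖ = |(n : ℝ)| * (2 * Real.pi) := by
      rw [norm_mul]
      have e1 : ‖((n : ℤ) : ℂ)‖ = |(n : ℝ)| := by
        rw [← Complex.ofReal_intCast, Complex.norm_real, Real.norm_eq_abs]
      have e2 : ‖(2 * (Real.pi : ℂ) * Complex.I)‖ = 2 * Real.pi := by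
        simp [abs_of_pos Real.pi_pos]
      rw [e1, e2]
    rw [hnval] at hnorm
    have hn0 : n = 0 := by
      by_contra hne
      have h1 : (1 : ℝ) ≤ |(n : ℝ)| := by
        rw [← Int.cast_abs]
        exact_mod_cast Int.one_le_abs hne
      nlinarith [Real.pi_pos]
    rw [hn0] at hn
    simp only [Int.cast_zero, zero_mul] at hn
    exact sub_eq_zero.mp hn

  exact hLdiff.congr_of_eventuallyEq hev

theorem bloch_type_iff_log_oscillation_nonvanishing (ω : ℝ → ℝ) (f : ℂ → ℂ) (C₀ : ℝ)
    (hf : DifferentiableOn ℂ f (ball (0 : ℂ) 1))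
    (hnz : ∀ z ∈ ball (0 : ℂ) 1, f z ≠ 0)
    (hpos : ∀ t ∈ Ioc (0 : ℝ) 1, 0 < ω t) (hC₀ : 0 < C₀)
    (hmod : ∀ a ∈ Ioc (0 : ℝ) 1, ∀ b ∈ Ioc (0 : ℝ) 1,
      1 / 2 ≤ a / b → a / b ≤ 2 → 1 / C₀ ≤ ω a / ω b ∧ ω a / ω b ≤ C₀) :
    (∃ C > 0, ∀ z ∈ ball (0 : ℂ) 1,
        ‖deriv f z‖ ≤ C * ω (1 - ‖z‖) / (1 - ‖z‖)) ↔
    (∃ C' > 0, ∀ z ∈ ball (0 : ℂ) 1,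
        ‖f z‖ *
          Real.log (sSup ((fun w => ‖f w‖) '' ball z ((1 - ‖z‖) / 2))
            / ‖f z‖) ≤ C' * ω (1 - ‖z‖)) := by
  constructor
  · -- forward direction
    rintro ⟨C, hC, hCb⟩
    refine ⟨C * C₀, by positivity, ?_⟩
    intro z hz
    set d : ℝ := 1 - ‖z‖ with hd
    have hz1 : ‖z‖ < 1 := by simpa [mem_ball, Complex.dist_eq] using hz
    have hd0 : 0 < d := by simp only [hd]; linarith
    have hd1 : d ≤ 1 := by simp only [hd]; have := norm_nonneg z; linarith
    have hr0 : 0 < d / 2 := by linarith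
    have hωd : 0 < ω d := hpos d ⟨hd0, hd1⟩
    have hsub : ball z (d / 2) ⊆ ball (0 : ℂ) 1 := by
      intro w hw
      have h1 : ‖w - z‖ < d / 2 := by simpa [mem_ball, Complex.dist_eq] using hw
      have h2 : ‖w‖ ≤ ‖w - z‖ + ‖z‖ := by
        simpa using norm_add_le (w - z) z
      simp only [mem_ball, Complex.dist_eq, sub_zero]
      have : ‖w‖ < d / 2 + ‖z‖ := by linarith
      simp only [hd] at this ⊢
      linarith
    set M : ℝ := sSup ((fun w => ‖f w‖) '' ball z (d / 2)) with hM
    have hfz0 : 0 < ‖f z‖ := by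
      simpa [norm_pos_iff] using hnz z hz
    -- derivative bound on the ball
    have hbound : ∀ x ∈ ball z (d / 2), ‖deriv f x‖ ≤ 2 * C * C₀ * ω d / d := by
      intro x hx
      have hx1 : x ∈ ball (0 : ℂ) 1 := hsub hx
      have hax : ‖x‖ < 1 := by simpa [mem_ball, Complex.dist_eq] using hx1
      set dx : ℝ := 1 - ‖x‖ with hdx
      have hdx0 : 0 < dx := by simp only [hdx]; linarith
      have hdx1 : dx ≤ 1 := by simp only [hdx]; have := norm_nonneg x; linarith
      have hxz : ‖x - z‖ < d / 2 := by simpa [mem_ball, Complex.dist_eq] using hx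
      have t1 : ‖x‖ ≤ ‖x - z‖ + ‖z‖ := by
        simpa using norm_add_le (x - z) z
      have t2 : ‖z‖ ≤ ‖z - x‖ + ‖x‖ := by
        simpa using norm_add_le (z - x) x
      have t3 : ‖z - x‖ = ‖x - z‖ := by
        rw [norm_sub_rev]
      have hhalf : d / 2 ≤ dx := by simp only [hdx, hd] at *; linarith
      have hupper : dx ≤ 2 * d := by simp only [hdx, hd] at *; linarith
      have hratio1 : 1 / 2 ≤ dx / d := by
        rw [le_div_iff₀ hd0]; linarith
      have hratio2 : dx / d ≤ 2 := by
        rw [div_le_iff₀ hd0]; linarith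
      have hmod' := (hmod dx ⟨hdx0, hdx1⟩ d ⟨hd0, hd1⟩ hratio1 hratio2).2
      have hωx : ω dx ≤ C₀ * ω d := by
        rw [div_le_iff₀ hωd] at hmod'; linarith
      have h1 := hCb x hx1
      rw [← hdx] at h1
      have hωdx : 0 < ω dx := hpos dx ⟨hdx0, hdx1⟩
      have h2 : C * ω dx / dx ≤ C * (C₀ * ω d) / (d / 2) := by
        apply div_le_div₀ (by positivity) _ hr0 hhalf
        exact mul_le_mul_of_nonneg_left hωx hC.le
      have h3 : C * (C₀ * ω d) / (d / 2) = 2 * C * C₀ * ω d / d := by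
        field_simp
      calc ‖deriv f x‖ = ‖deriv f x‖ := rfl
        _ ≤ C * ω dx / dx := h1
        _ ≤ C * (C₀ * ω d) / (d / 2) := h2
        _ = 2 * C * C₀ * ω d / d := h3
    have hdiff : ∀ x ∈ ball z (d / 2), DifferentiableAt ℂ f x := fun x hx =>
      hf.differentiableAt (isOpen_ball.mem_nhds (hsub hx))
    have himage : ∀ w ∈ ball z (d / 2), ‖f w‖ ≤ ‖f z‖ + C * C₀ * ω d := by
      intro w hw
      have hmvt := (convex_ball z (d / 2)).norm_image_sub_le_of_norm_deriv_le hdiff hbound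
        (mem_ball_self hr0) hw
      have hwz : ‖w - z‖ ≤ d / 2 := by
        have : ‖w - z‖ < d / 2 := by simpa [mem_ball, Complex.dist_eq] using hw
        exact this.le
      have h1 : ‖f w - f z‖ ≤ (2 * C * C₀ * ω d / d) * (d / 2) := by
        calc (‖f w - f z‖ : ℝ) = ‖f w - f z‖ := rfl
          _ ≤ (2 * C * C₀ * ω d / d) * ‖w - z‖ := hmvt
          _ ≤ (2 * C * C₀ * ω d / d) * (d / 2) := by
              apply mul_le_mul_of_nonneg_left hwz (by positivity)
      have h2 : (2 * C * C₀ * ω d / d) * (d / 2) = C * C₀ * ω d := by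
        field_simp
      have h3 : ‖f w‖ ≤ ‖f z‖ + ‖f w - f z‖ := by
        simpa using norm_add_le (f z) (f w - f z)
      rw [h2] at h1
      linarith
    have hMle : M ≤ ‖f z‖ + C * C₀ * ω d := by
      apply Real.sSup_le
      · rintro x ⟨w, hw, rfl⟩
        exact himage w hw
      · positivity
    have hbdd : BddAbove ((fun w => ‖f w‖) '' ball z (d / 2)) := by
      refine ⟨‖f z‖ + C * C₀ * ω d, ?_⟩
      rintro x ⟨w, hw, rfl⟩
      exact himage w hw
    have hfzM : ‖f z‖ ≤ M :=
      le_csSup hbdd ⟨z, mem_ball_self hr0, rfl⟩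
    have hM0 : 0 < M := lt_of_lt_of_le hfz0 hfzM
    have hlog : Real.log (M / ‖f z‖) ≤ M / ‖f z‖ - 1 :=
      Real.log_le_sub_one_of_pos (by positivity)
    calc ‖f z‖ * Real.log (M / ‖f z‖)
        ≤ ‖f z‖ * (M / ‖f z‖ - 1) :=
          mul_le_mul_of_nonneg_left hlog hfz0.le
      _ = M - ‖f z‖ := by field_simp
      _ ≤ C * C₀ * ω d := by linarith
  · -- backward direction
    rintro ⟨C', hC', hb⟩
    refine ⟨8 * C', by positivity, ?_⟩
    intro z hz
    set d : ℝ := 1 - ‖z‖ with hd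
    have hz1 : ‖z‖ < 1 := by simpa [mem_ball, Complex.dist_eq] using hz
    have hd0 : 0 < d := by simp only [hd]; linarith
    have hd1 : d ≤ 1 := by simp only [hd]; have := norm_nonneg z; linarith
    have hr0 : 0 < d / 2 := by linarith
    have hωd : 0 < ω d := hpos d ⟨hd0, hd1⟩
    have hsub : ball z (d / 2) ⊆ ball (0 : ℂ) 1 := by
      intro w hw
      have h1 : ‖w - z‖ < d / 2 := by simpa [mem_ball, Complex.dist_eq] using hw
      have h2 : ‖w‖ ≤ ‖w - z‖ + ‖z‖ := by
        simpa using norm_add_le (w - z) z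
      simp only [mem_ball, Complex.dist_eq, sub_zero]
      simp only [hd] at h1
      linarith
    have hsubc : closedBall z (d / 2) ⊆ ball (0 : ℂ) 1 := by
      intro w hw
      have h1 : ‖w - z‖ ≤ d / 2 := by
        simpa [mem_closedBall, Complex.dist_eq] using hw
      have h2 : ‖w‖ ≤ ‖w - z‖ + ‖z‖ := by
        simpa using norm_add_le (w - z) z
      simp only [mem_ball, Complex.dist_eq, sub_zero]
      simp only [hd] at h1
      linarith
    set M : ℝ := sSup ((fun w => ‖f w‖) '' ball z (d / 2)) with hM
    have hfz0 : 0 < ‖f z‖ := by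
      simpa [norm_pos_iff] using hnz z hz
    have hbdd : BddAbove ((fun w => ‖f w‖) '' ball z (d / 2)) := by
      have hcompact : IsCompact (closedBall z (d / 2)) := isCompact_closedBall z (d / 2)
      have hcont : ContinuousOn (fun w => ‖f w‖) (closedBall z (d / 2)) :=
        continuous_norm.comp_continuousOn ((hf.continuousOn).mono hsubc)
      have h1 := hcompact.bddAbove_image hcont
      exact h1.mono (image_mono ball_subset_closedBall)
    have hfzM : ‖f z‖ ≤ M :=
      le_csSup hbdd ⟨z, mem_ball_self hr0, rfl⟩
    have hM0 : 0 < M := lt_of_lt_of_le hfz0 hfzM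
    set A : ℝ := Real.log (M / ‖f z‖) with hA
    have hA0 : 0 ≤ A := Real.log_nonneg (by rw [le_div_iff₀ hfz0]; linarith)
    have hyp : ‖f z‖ * A ≤ C' * ω d := hb z hz
    have hrhs0 : 0 ≤ 8 * C' * ω d / d := by positivity
    rcases eq_or_lt_of_le hA0 with hAz | hApos
    · -- A = 0 : f has interior max modulus, so constant
      have hMeq : M = ‖f z‖ := by
        have hdivpos : 0 < M / ‖f z‖ := div_pos hM0 hfz0
        have h1 : M / ‖f z‖ = 1 := by
          rcases Real.log_eq_zero.mp hAz.symm with h | h | h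
          · linarith
          · exact h
          · linarith
        exact (div_eq_one_iff_eq hfz0.ne').mp h1
      have hmax : IsMaxOn (norm ∘ f) (ball z (d / 2)) z := by
        intro w hw
        have : ‖f w‖ ≤ M := le_csSup hbdd ⟨w, hw, rfl⟩
        simp only [Function.comp_apply, mem_setOf_eq]
        rw [hMeq] at this
        exact this
      have heq := Complex.eqOn_of_isPreconnected_of_isMaxOn_norm
        (convex_ball z (d / 2)).isPreconnected isOpen_ball (hf.mono hsub)
        (mem_ball_self hr0) hmax
      have hderiv0 : deriv f z = 0 := by
        have hev : f =ᶠ[nhds z] fun _ => f z := by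
          filter_upwards [isOpen_ball.mem_nhds (mem_ball_self hr0)] with w hw
          exact heq hw
        rw [hev.deriv_eq]
        exact deriv_const _ _
      rw [hderiv0]
      simpa using hrhs0
    · -- A > 0 : Borel–Carathéodory argument
      obtain ⟨g, hgdiff, hgexp⟩ := exists_holo_log hr0 (hf.mono hsub)
        (fun w hw => hnz w (hsub hw))
      have hzmem : z ∈ ball z (d / 2) := mem_ball_self hr0
      have hre : ∀ w ∈ ball z (d / 2), (g w - g z).re ≤ A := by
        intro w hw
        have h1 : (g w).re = Real.log (‖f w‖) := by
          have : ‖Complex.exp (g w)‖ = ‖f w‖ := by rw [hgexp w hw]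
          rw [Complex.norm_exp] at this
          rw [← this, Real.log_exp]
        have h2 : (g z).re = Real.log (‖f z‖) := by
          have : ‖Complex.exp (g z)‖ = ‖f z‖ := by rw [hgexp z hzmem]
          rw [Complex.norm_exp] at this
          rw [← this, Real.log_exp]
        have hfw0 : 0 < ‖f w‖ := by
          simpa [norm_pos_iff] using hnz w (hsub hw)
        have h3 : ‖f w‖ ≤ M := le_csSup hbdd ⟨w, hw, rfl⟩
        rw [Complex.sub_re, h1, h2, hA, Real.log_div hM0.ne' hfz0.ne']
        have h4 : Real.log (‖f w‖) ≤ Real.log M := Real.log_le_log hfw0 h3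
        linarith
      set N : ℂ → ℂ := fun w => ((4 * A : ℝ) : ℂ) - (g w - g z) with hN
      have hNre : ∀ w ∈ ball z (d / 2), 0 < (N w).re := by
        intro w hw
        have h9 : (g w).re - (g z).re ≤ A := by rw [← Complex.sub_re]; exact hre w hw
        simp only [hN, Complex.sub_re, Complex.ofReal_re]
        linarith
      have hN0 : ∀ w ∈ ball z (d / 2), N w ≠ 0 := by
        intro w hw hc
        have := hNre w hw
        rw [hc] at this
        simp at this
      set ψ : ℂ → ℂ := fun w => (g w - g z) * (N w)⁻¹ with hψ
      have hψz : ψ z = 0 := by simp [hψ]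
      have hψd : DifferentiableOn ℂ ψ (ball z (d / 2)) := by
        intro w hw
        have h1 : DifferentiableAt ℂ (fun w => g w - g z) w := (hgdiff w hw).sub_const _
        have h2 : DifferentiableAt ℂ N w := by
          simpa [hN] using (h1.const_sub (((4 * A : ℝ) : ℂ)))
        exact ((h1.mul (h2.inv (hN0 w hw)))).differentiableWithinAt
      have hmaps : MapsTo ψ (ball z (d / 2)) (ball (ψ z) 1) := by
        rw [hψz]
        intro w hw
        simp only [mem_ball, dist_eq_norm, sub_zero]
        have hNw := hN0 w hw
        rw [hψ]
        simp only [norm_mul, norm_inv]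
        rw [← div_eq_mul_inv, div_lt_one (norm_pos_iff.mpr hNw)]
        -- ‖g w - g z‖ < ‖N w‖
        have hx : (g w).re - (g z).re ≤ A := by rw [← Complex.sub_re]; exact hre w hw
        have hsq : Complex.normSq (g w - g z) < Complex.normSq (N w) := by
          simp only [hN, Complex.normSq_apply, Complex.sub_re, Complex.sub_im,
            Complex.ofReal_re, Complex.ofReal_im]
          nlinarith [hApos]
        have h5 : ‖g w - g z‖ = Real.sqrt (Complex.normSq (g w - g z)) := by
          rw [Complex.norm_def]
        have h6 : ‖N w‖ = Real.sqrt (Complex.normSq (N w)) := by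
          rw [Complex.norm_def]
        rw [h5, h6]
        exact Real.sqrt_lt_sqrt (Complex.normSq_nonneg _) hsq
      have hgz : HasDerivAt g (deriv g z) z := (hgdiff z hzmem).hasDerivAt
      set D : ℂ := deriv g z with hD
      have hφd : HasDerivAt (fun w => g w - g z) D z := hgz.sub_const _
      have hNd : HasDerivAt N (-D) z := by
        simpa [hN] using hφd.const_sub (((4 * A : ℝ) : ℂ))
      have hNz : N z = ((4 * A : ℝ) : ℂ) := by simp [hN]
      have hNz0 : N z ≠ 0 := hN0 z hzmem
      have hinv : HasDerivAt (fun w => (N w)⁻¹) (-(-D) / (N z) ^ 2) z := hNd.inv hNz0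
      have hψderiv : HasDerivAt ψ (D / ((4 * A : ℝ) : ℂ)) z := by
        have h7 := hφd.mul hinv
        have h8 : (g z - g z) = 0 := sub_self _
        have heval : D * (N z)⁻¹ + (g z - g z) * (-(-D) / (N z) ^ 2) = D / ((4 * A : ℝ) : ℂ) := by
          rw [h8, hNz]
          simp only [zero_mul, add_zero, div_eq_mul_inv]
        rw [← heval]
        exact h7
      have hschwarz := Complex.norm_deriv_le_div_of_mapsTo_ball hψd (hmaps.mono_right ball_subset_closedBall) hr0
      rw [hψderiv.deriv] at hschwarz
      have hAc0 : (((4 * A : ℝ) : ℂ)) ≠ 0 := by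
        simp only [ne_eq, Complex.ofReal_eq_zero]
        positivity
      have hDnorm : ‖D‖ / (4 * A) ≤ 1 / (d / 2) := by
        have : ‖D / ((4 * A : ℝ) : ℂ)‖ = ‖D‖ / (4 * A) := by
          rw [norm_div, Complex.norm_real, Real.norm_eq_abs, abs_of_pos (by positivity)]
        rwa [this] at hschwarz
      have hDle : ‖D‖ ≤ 4 * A / (d / 2) := by
        rw [div_le_div_iff₀ (by positivity) hr0] at hDnorm
        rw [le_div_iff₀ hr0]
        linarith
      -- deriv f z = f z * D
      have hfderiv : deriv f z = f z * D := by
        have hev : f =ᶠ[nhds z] fun w => Complex.exp (g w) := by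
          filter_upwards [isOpen_ball.mem_nhds hzmem] with w hw
          exact (hgexp w hw).symm
        rw [hev.deriv_eq]
        have := hgz.cexp
        rw [this.deriv, hgexp z hzmem]
      rw [hfderiv]
      have hfinal : ‖f z * D‖ = ‖f z‖ * ‖D‖ := by
        rw [norm_mul]
      rw [hfinal]
      have step1 : ‖f z‖ * ‖D‖ ≤ ‖f z‖ * (4 * A / (d / 2)) :=
        mul_le_mul_of_nonneg_left hDle hfz0.le
      have step2 : ‖f z‖ * (4 * A / (d / 2)) = (‖f z‖ * A) * (8 / d) := by
        field_simp; ring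
      have step3 : (‖f z‖ * A) * (8 / d) ≤ (C' * ω d) * (8 / d) :=
        mul_le_mul_of_nonneg_right hyp (by positivity)
      have step4 : (C' * ω d) * (8 / d) = 8 * C' * ω d / d := by
        field_simp
      calc ‖f z‖ * ‖D‖ ≤ ‖f z‖ * (4 * A / (d / 2)) := step1
        _ = (‖f z‖ * A) * (8 / d) := step2
        _ ≤ (C' * ω d) * (8 / d) := step3
        _ = 8 * C' * ω d / d := step4
end
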